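/- arXiv:1702.04577 — 12 statements merged into one kernel-verified Lean document; each statement's English description precedes it below -/
import Mathlib

section
/- For every integer n ≥ 2, there is no clustering function on an n-element set S that simultaneously satisfies scale-invariance, richness, and consistency. -/
open Finset

/-- A distance function on a finite set `S`. -/
def IsDistance {S : Type*} (d : S → S → ℝ) : Prop :=
  (∀ i j, d i j = d j i) ∧ (∀ i, d i i = 0) ∧ (∀ i j, i ≠ j → 0 < d i j)

/-- `i` and `j` belong to the same cluster of the partition `Γ`. -/
def SameCluster {S : Type*} [Fintype S] [DecidableEq S]
    (Γ : Finpartition (Finset.univ : Finset S)) (i j : S) : Prop :=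
  ∃ C ∈ Γ.parts, i ∈ C ∧ j ∈ C

/-- `d'` is a `Γ`-transformation of `d`. -/
def IsGammaTransform {S : Type*} [Fintype S] [DecidableEq S]
    (Γ : Finpartition (Finset.univ : Finset S)) (d d' : S → S → ℝ) : Prop :=
  (∀ i j, SameCluster Γ i j → d' i j ≤ d i j) ∧
  (∀ i j, ¬ SameCluster Γ i j → d i j ≤ d' i j)

/-- Scale-invariance of a clustering function. -/
def ScaleInvariant {S : Type*} [Fintype S] [DecidableEq S]
    (f : (S → S → ℝ) → Finpartition (Finset.univ : Finset S)) : Prop :=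
  ∀ d : S → S → ℝ, IsDistance d → ∀ α : ℝ, 0 < α →
    f (fun i j => α * d i j) = f d

/-- Richness of a clustering function. -/
def Rich {S : Type*} [Fintype S] [DecidableEq S]
    (f : (S → S → ℝ) → Finpartition (Finset.univ : Finset S)) : Prop :=
  ∀ Γ : Finpartition (Finset.univ : Finset S), ∃ d : S → S → ℝ, IsDistance d ∧ f d = Γ

/-- Consistency of a clustering function. -/
def Consistent {S : Type*} [Fintype S] [DecidableEq S]
    (f : (S → S → ℝ) → Finpartition (Finset.univ : Finset S)) : Prop :=
  ∀ d d' : S → S → ℝ, IsDistance d → IsDistance d' →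
    IsGammaTransform (f d) d d' → f d' = f d

/-- Kleinberg's impossibility theorem: for every `n ≥ 2` there is no clustering
function on an `n`-element set satisfying scale-invariance, richness and consistency. -/
theorem kleinberg_impossibility (n : ℕ) (hn : 2 ≤ n) :
    ¬ ∃ f : (Fin n → Fin n → ℝ) → Finpartition (Finset.univ : Finset (Fin n)),
        ScaleInvariant f ∧ Rich f ∧ Consistent f := by

  rintro ⟨f, hscale, hrich, hcons⟩
  -- the indiscrete (one-cluster) partition
  have huniv_ne : (Finset.univ : Finset (Fin n)) ≠ ⊥ := by
    intro h
    have hmem : (⟨0, by omega⟩ : Fin n) ∈ (Finset.univ : Finset (Fin n)) :=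
      Finset.mem_univ _
    rw [h] at hmem
    simp at hmem
  set Γtop : Finpartition (Finset.univ : Finset (Fin n)) :=
    Finpartition.indiscrete huniv_ne with hΓtop
  obtain ⟨d₀, hd₀, hfd₀⟩ := hrich ⊥
  obtain ⟨d₁, hd₁, hfd₁⟩ := hrich Γtop
  obtain ⟨hs₀, hz₀, hp₀⟩ := hd₀
  obtain ⟨hs₁, hz₁, hp₁⟩ := hd₁
  -- two distinct points
  have h01 : (⟨0, by omega⟩ : Fin n) ≠ ⟨1, by omega⟩ := by
    intro h; simpa using congrArg Fin.val h
  -- off-diagonal pairs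
  set offdiag : Finset (Fin n × Fin n) :=
    Finset.univ.filter (fun p => p.1 ≠ p.2) with hoff
  have hoffne : offdiag.Nonempty :=
    ⟨(⟨0, by omega⟩, ⟨1, by omega⟩), by simp [hoff, h01]⟩
  set M : ℝ := offdiag.sup' hoffne (fun p => d₀ p.1 p.2) with hM
  set m : ℝ := offdiag.inf' hoffne (fun p => d₁ p.1 p.2) with hm
  have hmpos : 0 < m := by
    rw [hm, Finset.lt_inf'_iff]
    rintro ⟨i, j⟩ hij
    exact hp₁ i j (by simpa [hoff] using hij)
  have hMpos : 0 < M := by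
    have hmem : ((⟨0, by omega⟩ : Fin n), (⟨1, by omega⟩ : Fin n)) ∈ offdiag := by
      rw [hoff]; exact Finset.mem_filter.mpr ⟨Finset.mem_univ _, h01⟩
    have : d₀ (⟨0, by omega⟩ : Fin n) ⟨1, by omega⟩ ≤ M :=
      Finset.le_sup' (fun p => d₀ p.1 p.2) hmem
    linarith [hp₀ _ _ h01]
  set α : ℝ := M / m with hα
  have hαpos : 0 < α := div_pos hMpos hmpos
  set d' : Fin n → Fin n → ℝ := fun i j => α * d₁ i j with hd'
  have hd'dist : IsDistance d' := by
    refine ⟨fun i j => ?_, fun i => ?_, fun i j hij => mul_pos hαpos (hp₁ i j hij)⟩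
    · show α * d₁ i j = α * d₁ j i
      rw [hs₁ i j]
    · show α * d₁ i i = 0
      rw [hz₁ i, mul_zero]
  have hfd' : f d' = Γtop := by
    rw [hd']
    rw [hscale d₁ ⟨hs₁, hz₁, hp₁⟩ α hαpos, hfd₁]
  have hkey : ∀ i j : Fin n, i ≠ j → d₀ i j ≤ d' i j := by
    intro i j hij
    have hmem : (i, j) ∈ offdiag := by
      rw [hoff]; exact Finset.mem_filter.mpr ⟨Finset.mem_univ _, hij⟩
    have h1 : d₀ i j ≤ M := Finset.le_sup' (fun p => d₀ p.1 p.2) hmem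
    have h2 : m ≤ d₁ i j := Finset.inf'_le (fun p => d₁ p.1 p.2) hmem
    have : M = α * m := by rw [hα, div_mul_cancel₀ M hmpos.ne']
    calc d₀ i j ≤ M := h1
      _ = α * m := this
      _ ≤ α * d₁ i j := by nlinarith
  have htrans : IsGammaTransform (f d₀) d₀ d' := by
    constructor
    · intro i j hsame
      rw [hfd₀] at hsame
      obtain ⟨C, hC, hiC, hjC⟩ := hsame
      rw [Finpartition.mem_bot_iff] at hC
      obtain ⟨a, -, rfl⟩ := hC
      have hij : i = j := (Finset.mem_singleton.mp hiC).trans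
        (Finset.mem_singleton.mp hjC).symm
      subst hij
      show α * d₁ i i ≤ d₀ i i
      rw [hz₀ i, hz₁ i, mul_zero]
    · intro i j hnsame
      have hij : i ≠ j := by
        rintro rfl
        exact hnsame ((f d₀).exists_mem (Finset.mem_univ i) |>.imp
          fun C hC => ⟨hC.1, hC.2, hC.2⟩)
      exact hkey i j hij
  have : f d' = f d₀ := hcons d₀ d' ⟨hs₀, hz₀, hp₀⟩ hd'dist htrans
  rw [hfd', hfd₀] at this
  -- Γtop ≠ ⊥
  have huniv_mem : (Finset.univ : Finset (Fin n)) ∈ Γtop.parts := by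
    simp [hΓtop]
  rw [this, Finpartition.mem_bot_iff] at huniv_mem
  obtain ⟨a, -, ha⟩ := huniv_mem
  have : (Finset.univ : Finset (Fin n)).card = 1 := by rw [← ha]; simp
  simp at this
  omega
end

section
/- For a set S with exactly 2 elements, there is no clustering function on S that satisfies both scale-invariance and richness. -/
open Finset

/-- On a two-element set there is no clustering function that is both
scale-invariant and rich. -/
theorem no_scaleInvariant_rich_on_two_points (S : Type*) [Fintype S] [DecidableEq S]
    (hS : Fintype.card S = 2) :
    ¬ ∃ f : (S → S → ℝ) → Finpartition (Finset.univ : Finset S),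
        ScaleInvariant f ∧ Rich f := by
  rintro ⟨f, hsi, hrich⟩
  -- two distinct elements
  obtain ⟨a, b, hab⟩ : ∃ a b : S, a ≠ b := Fintype.exists_pair_of_one_lt_card (by omega)
  have hne : (Finset.univ : Finset S) ≠ ⊥ := by
    have : (Finset.univ : Finset S).Nonempty := ⟨a, mem_univ a⟩
    simpa [Finset.nonempty_iff_ne_empty] using this
  set Γtop := Finpartition.indiscrete hne with hΓ
  have hΓne : (⊥ : Finpartition (Finset.univ : Finset S)) ≠ Γtop := by
    intro h
    have h1 : ({a} : Finset S) ∈ (⊥ : Finpartition (Finset.univ : Finset S)).parts := by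
      rw [Finpartition.mem_bot_iff]; exact ⟨a, mem_univ a, rfl⟩
    rw [h] at h1
    simp [Γtop, Finpartition.indiscrete] at h1
    have := h1 ▸ (mem_univ b)
    simp at this
    exact hab this.symm
  obtain ⟨d1, hd1, hf1⟩ := hrich ⊥
  obtain ⟨d2, hd2, hf2⟩ := hrich Γtop
  obtain ⟨h1s, h1z, h1p⟩ := hd1
  obtain ⟨h2s, h2z, h2p⟩ := hd2
  set α := d2 a b / d1 a b with hα
  have hd1pos := h1p a b hab
  have hd2pos := h2p a b hab
  have hαpos : 0 < α := div_pos hd2pos hd1pos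
  have key : d2 = fun i j => α * d1 i j := by
    funext i j
    by_cases hij : i = j
    · simp [hij, h1z, h2z]
    · have huniv : ∀ x y : S, x ≠ y → ({x, y} : Finset S) = Finset.univ := by
        intro x y hxy
        apply Finset.eq_univ_of_card
        rw [Finset.card_insert_of_notMem (by simp [hxy]), Finset.card_singleton, hS]
      have hji : ({i, j} : Finset S) = {a, b} := (huniv i j hij).trans (huniv a b hab).symm
      have : (i = a ∧ j = b) ∨ (i = b ∧ j = a) := by
        have hi : i ∈ ({a, b} : Finset S) := hji ▸ (by simp)
        have hj : j ∈ ({a, b} : Finset S) := hji ▸ (by simp)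
        simp at hi hj
        rcases hi with hi | hi <;> rcases hj with hj | hj <;> simp_all
      rcases this with ⟨hi, hj⟩ | ⟨hi, hj⟩ <;> subst hi <;> subst hj
      · rw [hα, div_mul_cancel₀ _ hd1pos.ne']
      · rw [h2s, h1s]; rw [hα, div_mul_cancel₀ _ hd1pos.ne']
  have := hsi d1 ⟨h1s, h1z, h1p⟩ α hαpos
  rw [← key, hf2, hf1] at this
  exact hΓne this.symm
end

section
/- Let n > 2, let m ≥ 1, and let f be a clustering function defined on the distance functions on an n-element set S that are realizable in ℝ^m. If f satisfies scale-invariance and consistency (with respect to rescalings and Γ-transformations that stay within the realizable distance functions), and f(d1) equals the one-cluster (no-split) partition {S} for some realizable distance function d1, then f(d2) = {S} for every realizable distance function d2; in particular, no such f can produce both the no-split partition under some distance function and any other partition under another distance function. -/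
open Finset

/-- A distance function on `S` is realizable in `ℝ^m` if it is induced by an
injective embedding of `S` into `ℝ^m`. -/
def RealizableIn {S : Type*} (m : ℕ) (d : S → S → ℝ) : Prop :=
  ∃ φ : S → EuclideanSpace ℝ (Fin m), Function.Injective φ ∧
    ∀ i j, d i j = dist (φ i) (φ j)

/-- Scale-invariance restricted to distance functions realizable in `ℝ^m`. -/
def ScaleInvariantOn {S : Type*} [Fintype S] [DecidableEq S] (m : ℕ)
    (f : (S → S → ℝ) → Finpartition (Finset.univ : Finset S)) : Prop :=
  ∀ d : S → S → ℝ, RealizableIn m d → ∀ α : ℝ, 0 < α →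
    RealizableIn m (fun i j => α * d i j) →
    f (fun i j => α * d i j) = f d

/-- Consistency restricted to distance functions realizable in `ℝ^m`. -/
def ConsistentOn {S : Type*} [Fintype S] [DecidableEq S] (m : ℕ)
    (f : (S → S → ℝ) → Finpartition (Finset.univ : Finset S)) : Prop :=
  ∀ d d' : S → S → ℝ, RealizableIn m d → RealizableIn m d' →
    IsGammaTransform (f d) d d' → f d' = f d

/-- For `n > 2` and `m ≥ 1`, a clustering function on the distance functions on an
`n`-element set realizable in `ℝ^m` that is scale-invariant and consistent and returns
the one-cluster (no-split) partition on some realizable distance function returns the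
no-split partition on every realizable distance function. -/
theorem no_split_forces_trivial (n m : ℕ) (hn : 2 < n) (hm : 1 ≤ m)
    (f : (Fin n → Fin n → ℝ) → Finpartition (Finset.univ : Finset (Fin n)))
    (hscale : ScaleInvariantOn m f) (hcons : ConsistentOn m f)
    (d1 : Fin n → Fin n → ℝ) (hd1 : RealizableIn m d1)
    (h1 : (f d1).parts = {(Finset.univ : Finset (Fin n))}) :
    ∀ d2 : Fin n → Fin n → ℝ, RealizableIn m d2 →
      (f d2).parts = {(Finset.univ : Finset (Fin n))} := by
  intro d2 hd2
  obtain ⟨φ1, hφ1inj, hφ1⟩ := hd1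
  obtain ⟨φ2, hφ2inj, hφ2⟩ := hd2
  have hne : (Finset.univ.offDiag : Finset (Fin n × Fin n)).Nonempty := by
    refine ⟨(⟨0, by omega⟩, ⟨1, by omega⟩), ?_⟩
    simp [Finset.mem_offDiag, Fin.ext_iff]
  set ε : ℝ := Finset.inf' _ hne (fun p : Fin n × Fin n => d1 p.1 p.2) with hεdef
  have hε : 0 < ε := by
    rw [hεdef, Finset.lt_inf'_iff]
    rintro ⟨i, j⟩ hij
    simp only [Finset.mem_offDiag] at hij
    rw [hφ1 i j, dist_pos]
    exact fun h => hij.2.2 (hφ1inj h)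
  have hune : (Finset.univ : Finset (Fin n × Fin n)).Nonempty := by
    exact ⟨(⟨0, by omega⟩, ⟨0, by omega⟩), Finset.mem_univ _⟩
  set M : ℝ := Finset.sup' _ hune (fun p : Fin n × Fin n => d2 p.1 p.2) with hMdef
  have hM0 : 0 ≤ M := by
    have := Finset.le_sup' (fun p : Fin n × Fin n => d2 p.1 p.2)
      (Finset.mem_univ (⟨0, by omega⟩, ⟨0, by omega⟩))
    have h0 : d2 ⟨0, by omega⟩ ⟨0, by omega⟩ = 0 := by rw [hφ2]; simp
    rw [hMdef]; rw [h0] at this; exact this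
  have hM1 : (0:ℝ) < M + 1 := by linarith
  set α : ℝ := ε / (M + 1) with hαdef
  have hα : 0 < α := div_pos hε hM1
  have hreal : RealizableIn m (fun i j => α * d2 i j) := by
    refine ⟨fun i => α • φ2 i, fun a b h => hφ2inj (smul_right_injective _ (ne_of_gt hα) h), ?_⟩
    intro i j
    show α * d2 i j = dist (α • φ2 i) (α • φ2 j)
    rw [hφ2 i j, dist_smul₀, Real.norm_eq_abs, abs_of_pos hα]
  have hsame : ∀ i j : Fin n, SameCluster (f d1) i j := by
    intro i j
    exact ⟨Finset.univ, by rw [h1]; simp, Finset.mem_univ _, Finset.mem_univ _⟩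
  have hle : ∀ i j : Fin n, α * d2 i j ≤ d1 i j := by
    intro i j
    by_cases hij : i = j
    · subst hij
      have h2 : d2 i i = 0 := by rw [hφ2]; simp
      have h1' : d1 i i = 0 := by rw [hφ1]; simp
      rw [h2, h1', mul_zero]
    · have hd2M : d2 i j ≤ M :=
        Finset.le_sup' (fun p : Fin n × Fin n => d2 p.1 p.2) (Finset.mem_univ (i, j))
      have hεd1 : ε ≤ d1 i j := by
        have hmem : (i, j) ∈ (Finset.univ.offDiag : Finset (Fin n × Fin n)) := by
          simp [Finset.mem_offDiag, hij]
        exact Finset.inf'_le (fun p : Fin n × Fin n => d1 p.1 p.2) hmem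
      have : α * d2 i j ≤ α * M := by nlinarith
      have hαM : α * M ≤ ε := by
        rw [hαdef, div_mul_eq_mul_div, div_le_iff₀ hM1]
        nlinarith
      linarith
  have key : f (fun i j => α * d2 i j) = f d1 := by
    refine hcons d1 _ ⟨φ1, hφ1inj, hφ1⟩ hreal ⟨fun i j _ => hle i j, fun i j h => ?_⟩
    exact absurd (hsame i j) h
  have hsc : f (fun i j => α * d2 i j) = f d2 :=
    hscale d2 ⟨φ2, hφ2inj, hφ2⟩ α hα hreal
  rw [← hsc, key, h1]
end

section
/- Let n ≥ 1 and m > 2, and let f be a clustering function defined on the distance functions on the set S = {1,…,n+2} that are realizable in ℝ^m. If f satisfies scale-invariance and consistency (with respect to rescalings and Γ-transformations that stay within the realizable distance functions), then f cannot return the partition Γ1 = {{1,…,n},{n+1,n+2}} under some realizable distance function d1 and also return the partition Γ2 = {{1,…,n},{n+1},{n+2}} under some realizable distance function d2. -/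
open Finset

/-- For `n ≥ 1` and `m > 2`, no scale-invariant and consistent clustering function
on the distance functions on `{1,…,n+2}` realizable in `ℝ^m` can return the
partition `{{1,…,n},{n+1,n+2}}` under some realizable distance function and also the
partition `{{1,…,n},{n+1},{n+2}}` under some realizable distance function. -/
theorem no_two_vs_three_cluster_partitions (n m : ℕ) (hn : 1 ≤ n) (hm : 2 < m)
    (f : (Fin (n + 2) → Fin (n + 2) → ℝ) →
      Finpartition (Finset.univ : Finset (Fin (n + 2))))
    (hscale : ScaleInvariantOn m f) (hcons : ConsistentOn m f) :
    ¬ ((∃ d1 : Fin (n + 2) → Fin (n + 2) → ℝ, RealizableIn m d1 ∧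
          (f d1).parts =
            {Finset.univ.filter (fun i : Fin (n + 2) => (i : ℕ) < n),
             Finset.univ.filter (fun i : Fin (n + 2) => n ≤ (i : ℕ))}) ∧
       (∃ d2 : Fin (n + 2) → Fin (n + 2) → ℝ, RealizableIn m d2 ∧
          (f d2).parts =
            {Finset.univ.filter (fun i : Fin (n + 2) => (i : ℕ) < n),
             {(⟨n, by omega⟩ : Fin (n + 2))},
             {(⟨n + 1, by omega⟩ : Fin (n + 2))}})) := by
  classical
  rintro ⟨⟨d1, hr1, h1⟩, d2, hr2, h2⟩
  set p : Fin (n + 2) := ⟨n, by omega⟩ with hpdef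
  set q : Fin (n + 2) := ⟨n + 1, by omega⟩ with hqdef
  set A : Finset (Fin (n + 2)) :=
    Finset.univ.filter (fun i : Fin (n + 2) => (i : ℕ) < n) with hAdef
  set B : Finset (Fin (n + 2)) :=
    Finset.univ.filter (fun i : Fin (n + 2) => n ≤ (i : ℕ)) with hBdef
  have hpval : (p : ℕ) = n := rfl
  have hqval : (q : ℕ) = n + 1 := rfl
  have hpq : p ≠ q := by
    intro h
    rw [Fin.ext_iff, hpval, hqval] at h
    omega
  obtain ⟨φ1, hφ1i, hφ1⟩ := id hr1
  obtain ⟨φ2, hφ2i, hφ2⟩ := id hr2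
  have d1pos : ∀ i j : Fin (n + 2), i ≠ j → 0 < d1 i j := fun i j h => by
    rw [hφ1]; exact dist_pos.2 fun he => h (hφ1i he)
  have d2pos : ∀ i j : Fin (n + 2), i ≠ j → 0 < d2 i j := fun i j h => by
    rw [hφ2]; exact dist_pos.2 fun he => h (hφ2i he)
  have d1symm : ∀ i j, d1 i j = d1 j i := fun i j => by rw [hφ1, hφ1, dist_comm]
  have d1zero : ∀ i, d1 i i = 0 := fun i => by rw [hφ1]; simp
  have d2zero : ∀ i, d2 i i = 0 := fun i => by rw [hφ2]; simp
  -- upper bound D and lower bound c on distances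
  obtain ⟨D, hD⟩ : ∃ D : ℝ, ∀ i j : Fin (n + 2), d1 i j ≤ D ∧ d2 i j ≤ D := by
    obtain ⟨D, hD⟩ := Finite.exists_le
      fun pr : Fin (n + 2) × Fin (n + 2) => max (d1 pr.1 pr.2) (d2 pr.1 pr.2)
    exact ⟨D, fun i j =>
      ⟨(le_max_left _ _).trans (hD (i, j)), (le_max_right _ _).trans (hD (i, j))⟩⟩
  obtain ⟨c, hcpos, hc1, hc2⟩ : ∃ c : ℝ, 0 < c ∧
      (∀ i j, i ≠ j → c ≤ d1 i j) ∧ (∀ i j, i ≠ j → c ≤ d2 i j) := by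
    set s : Finset (Fin (n + 2) × Fin (n + 2)) :=
      Finset.univ.filter (fun pr => pr.1 ≠ pr.2) with hs
    have hsne : s.Nonempty := ⟨(p, q), by simp [hs, hpq]⟩
    refine ⟨s.inf' hsne (fun pr => min (d1 pr.1 pr.2) (d2 pr.1 pr.2)), ?_, ?_, ?_⟩
    · rw [Finset.lt_inf'_iff]
      intro b hb
      simp only [hs, Finset.mem_filter, Finset.mem_univ, true_and] at hb
      exact lt_min (d1pos _ _ hb) (d2pos _ _ hb)
    · intro i j hij
      exact le_trans
        (Finset.inf'_le (b := (i, j)) _ (by simp [hs, hij])) (min_le_left _ _)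
    · intro i j hij
      exact le_trans
        (Finset.inf'_le (b := (i, j)) _ (by simp [hs, hij])) (min_le_right _ _)
  have hd1pq : 0 < d1 p q := d1pos p q hpq
  have hDpos : 0 < D := lt_of_lt_of_le hd1pq (hD p q).1
  set α : ℝ := d1 p q / D with hαdef
  have hα : 0 < α := div_pos hd1pq hDpos
  have hα1 : α ≤ 1 := (div_le_one hDpos).2 (hD p q).1
  set M : ℝ := D / α + c with hMdef
  have hDα : D ≤ D / α := by
    rw [le_div_iff₀ hα]; nlinarith
  have hMc : c < M := by
    have : 0 < D / α := by positivity
    simp only [hMdef]; linarith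
  -- the line configuration
  set x : Fin (n + 2) → ℝ := fun i =>
    if (i : ℕ) < n then (i : ℕ) * (c / n) else if (i : ℕ) = n then M else M + D
    with hxdef
  have hxA : ∀ i : Fin (n + 2), (i : ℕ) < n → 0 ≤ x i ∧ x i ≤ c := by
    intro i hi
    simp only [hxdef, if_pos hi]
    refine ⟨by positivity, ?_⟩
    calc ((i : ℕ) : ℝ) * (c / n) ≤ (n : ℝ) * (c / n) := by
          apply mul_le_mul_of_nonneg_right _ (by positivity)
          exact_mod_cast hi.le
      _ = c := by
          field_simp
  have hxp : x p = M := by simp [hxdef, hpdef]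
  have hxq : x q = M + D := by simp [hxdef, hqdef]
  have hxM : ∀ j : Fin (n + 2), n ≤ (j : ℕ) → M ≤ x j := by
    intro j hj
    simp only [hxdef, if_neg (by omega : ¬ (j : ℕ) < n)]
    by_cases h : (j : ℕ) = n <;> simp [h] <;> linarith
  have hgap2 : ∀ i j : Fin (n + 2), (i : ℕ) < n → n ≤ (j : ℕ) → D / α ≤ x j - x i := by
    intro i j hi hj
    have h1 := (hxA i hi).2
    have h2 := hxM j hj
    simp only [hMdef] at h2
    linarith
  have hfar : ∀ i j : Fin (n + 2), (i : ℕ) < (j : ℕ) → n ≤ (j : ℕ) → D ≤ x j - x i := by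
    intro i j hij hj
    by_cases hi : (i : ℕ) < n
    · exact le_trans hDα (hgap2 i j hi hj)
    · have hi' : (i : ℕ) = n := by omega
      have hj' : (j : ℕ) = n + 1 := by omega
      have hxi : x i = M := by simp [hxdef, hi']
      have hxj : x j = M + D := by simp [hxdef, hj']
      rw [hxi, hxj]; linarith
  have hxmono : ∀ i j : Fin (n + 2), (i : ℕ) < (j : ℕ) → x i < x j := by
    intro i j hij
    by_cases hjn : (j : ℕ) < n
    · have hin : (i : ℕ) < n := by omega
      simp only [hxdef, if_pos hjn, if_pos hin]
      exact mul_lt_mul_of_pos_right (by exact_mod_cast hij) (by positivity)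
    · have hxj : M ≤ x j := hxM j (by omega)
      by_cases hin : (i : ℕ) < n
      · have := (hxA i hin).2
        linarith
      · have hi' : (i : ℕ) = n := by omega
        have hj' : (j : ℕ) = n + 1 := by omega
        have hxi : x i = M := by simp [hxdef, hi']
        have hxj' : x j = M + D := by simp [hxdef, hj']
        rw [hxi, hxj']; linarith
  have hxinj : Function.Injective x := by
    intro i j h
    rcases lt_trichotomy (i : ℕ) (j : ℕ) with h' | h' | h'
    · exact absurd h (ne_of_lt (hxmono i j h'))
    · exact Fin.ext h'
    · exact absurd h.symm (ne_of_lt (hxmono j i h'))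
  -- realizability of line configurations
  have hreal : ∀ y : Fin (n + 2) → ℝ, Function.Injective y →
      RealizableIn m (fun i j => |y i - y j|) := by
    intro y hy
    have hv : (EuclideanSpace.single (⟨0, by omega⟩ : Fin m) (1 : ℝ)) ≠ 0 := by
      intro h
      have h2 := EuclideanSpace.norm_single (𝕜 := ℝ) (⟨0, by omega⟩ : Fin m) (1 : ℝ)
      rw [h] at h2
      simp at h2
    refine ⟨fun i => (y i) • EuclideanSpace.single (⟨0, by omega⟩ : Fin m) (1 : ℝ),
      ?_, ?_⟩
    · intro i j hij
      exact hy (smul_left_injective ℝ hv hij)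
    · intro i j
      rw [dist_eq_norm, ← sub_smul, norm_smul, EuclideanSpace.norm_single]
      simp [Real.norm_eq_abs]
  set d' : Fin (n + 2) → Fin (n + 2) → ℝ := fun i j => |x i - x j| with hd'def
  have hrd' : RealizableIn m d' := hreal x hxinj
  have hrαd' : RealizableIn m (fun i j => α * d' i j) := by
    have hinj : Function.Injective (fun i => α * x i) := by
      intro i j h
      exact hxinj (mul_left_cancel₀ (ne_of_gt hα) h)
    have := hreal (fun i => α * x i) hinj
    have heq : (fun i j => |α * x i - α * x j|) = fun i j => α * d' i j := by
      funext i j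
      rw [hd'def, ← mul_sub, abs_mul, abs_of_pos hα]
    rwa [heq] at this
  -- membership helpers
  have hmemA : ∀ i : Fin (n + 2), i ∈ A ↔ (i : ℕ) < n := by
    intro i; simp [hAdef]
  have hmemB : ∀ i : Fin (n + 2), i ∈ B ↔ n ≤ (i : ℕ) := by
    intro i; simp [hBdef]
  have hpB : p ∈ B := (hmemB p).2 (by omega)
  have hqB : q ∈ B := (hmemB q).2 (by omega)
  -- d' is a Γ₂-transformation of d2
  have htrans2 : IsGammaTransform (f d2) d2 d' := by
    constructor
    · rintro i j ⟨C, hC, hiC, hjC⟩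
      rw [h2] at hC
      simp only [Finset.mem_insert, Finset.mem_singleton] at hC
      rcases hC with rfl | rfl | rfl
      · rw [hmemA] at hiC hjC
        by_cases hij : i = j
        · subst hij
          rw [d2zero]
          simp [hd'def]
        · have hb : d' i j ≤ c := by
            have hi := hxA i hiC
            have hj := hxA j hjC
            rw [hd'def, abs_sub_le_iff]
            constructor <;> linarith [hi.1, hi.2, hj.1, hj.2]
          exact hb.trans (hc2 i j hij)
      · rw [Finset.mem_singleton] at hiC hjC
        subst hiC; subst hjC
        rw [d2zero]
        simp [hd'def]
      · rw [Finset.mem_singleton] at hiC hjC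
        subst hiC; subst hjC
        rw [d2zero]
        simp [hd'def]
    · intro i j hns
      have hcov : ∀ k : Fin (n + 2), SameCluster (f d2) k k := by
        intro k
        by_cases hk : (k : ℕ) < n
        · exact ⟨A, by rw [h2]; simp, (hmemA k).2 hk, (hmemA k).2 hk⟩
        · by_cases hk' : (k : ℕ) = n
          · have hkp : k = p := Fin.ext hk'
            exact ⟨{p}, by rw [h2]; simp, by simp [hkp], by simp [hkp]⟩
          · have hkq : k = q := Fin.ext (by omega)
            exact ⟨{q}, by rw [h2]; simp, by simp [hkq], by simp [hkq]⟩
      have hij : i ≠ j := by rintro rfl; exact hns (hcov i)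
      have hnA : ¬ ((i : ℕ) < n ∧ (j : ℕ) < n) := by
        rintro ⟨hi, hj⟩
        exact hns ⟨A, by rw [h2]; simp, (hmemA i).2 hi, (hmemA j).2 hj⟩
      have key : D ≤ d' i j := by
        rcases lt_trichotomy (i : ℕ) (j : ℕ) with h' | h' | h'
        · have hj : n ≤ (j : ℕ) := by omega
          calc D ≤ x j - x i := hfar i j h' hj
            _ ≤ |x i - x j| := by rw [abs_sub_comm]; exact le_abs_self _
        · exact absurd (Fin.ext h') hij
        · have hi : n ≤ (i : ℕ) := by omega
          calc D ≤ x i - x j := hfar j i h' hi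
            _ ≤ |x i - x j| := le_abs_self _
      exact le_trans (hD i j).2 key
  have e1 : f d' = f d2 := hcons d2 d' hr2 hrd' htrans2
  have e2 : f (fun i j => α * d' i j) = f d' := hscale d' hrd' α hα hrαd'
  -- α • d' is a Γ₁-transformation of d1
  have hDformula : α * D = d1 p q := by
    rw [hαdef]; field_simp
  have htrans1 : IsGammaTransform (f d1) d1 (fun i j => α * d' i j) := by
    constructor
    · rintro i j ⟨C, hC, hiC, hjC⟩
      rw [h1] at hC
      simp only [Finset.mem_insert, Finset.mem_singleton] at hC
      rcases hC with rfl | rfl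
      · rw [hmemA] at hiC hjC
        by_cases hij : i = j
        · subst hij
          rw [d1zero]
          simp [hd'def]
        · have hb : d' i j ≤ c := by
            have hi := hxA i hiC
            have hj := hxA j hjC
            rw [hd'def, abs_sub_le_iff]
            constructor <;> linarith [hi.1, hi.2, hj.1, hj.2]
          calc α * d' i j ≤ 1 * d' i j := by
                apply mul_le_mul_of_nonneg_right hα1
                rw [hd'def]; exact abs_nonneg _
            _ = d' i j := one_mul _
            _ ≤ c := hb
            _ ≤ d1 i j := hc1 i j hij
      · rw [hmemB] at hiC hjC
        by_cases hij : i = j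
        · subst hij
          rw [d1zero]
          simp [hd'def]
        · have hd'pq : d' i j = D := by
            rcases lt_trichotomy (i : ℕ) (j : ℕ) with h' | h' | h'
            · have hi' : (i : ℕ) = n := by omega
              have hj' : (j : ℕ) = n + 1 := by omega
              have hxi : x i = M := by simp [hxdef, hi']
              have hxj : x j = M + D := by simp [hxdef, hj']
              show |x i - x j| = D
              rw [hxi, hxj, abs_sub_comm, show M + D - M = D by ring]
              exact abs_of_pos hDpos
            · exact absurd (Fin.ext h') hij
            · have hj' : (j : ℕ) = n := by omega
              have hi' : (i : ℕ) = n + 1 := by omega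
              have hxi : x i = M + D := by simp [hxdef, hi']
              have hxj : x j = M := by simp [hxdef, hj']
              show |x i - x j| = D
              rw [hxi, hxj, show M + D - M = D by ring]
              exact abs_of_pos hDpos
          have hd1ij : d1 i j = d1 p q := by
            rcases lt_trichotomy (i : ℕ) (j : ℕ) with h' | h' | h'
            · have hip : i = p := Fin.ext (by omega)
              have hjq : j = q := Fin.ext (by omega)
              rw [hip, hjq]
            · exact absurd (Fin.ext h') hij
            · have hiq : i = q := Fin.ext (by omega)
              have hjp : j = p := Fin.ext (by omega)
              rw [hiq, hjp, d1symm]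
          exact le_of_eq (show α * d' i j = d1 i j by rw [hd'pq, hd1ij, hDformula])
    · intro i j hns
      have hcov : ∀ k : Fin (n + 2), SameCluster (f d1) k k := by
        intro k
        by_cases hk : (k : ℕ) < n
        · exact ⟨A, by rw [h1]; simp, (hmemA k).2 hk, (hmemA k).2 hk⟩
        · exact ⟨B, by rw [h1]; simp, (hmemB k).2 (by omega), (hmemB k).2 (by omega)⟩
      have hij : i ≠ j := by rintro rfl; exact hns (hcov i)
      have hnA : ¬ ((i : ℕ) < n ∧ (j : ℕ) < n) := by
        rintro ⟨hi, hj⟩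
        exact hns ⟨A, by rw [h1]; simp, (hmemA i).2 hi, (hmemA j).2 hj⟩
      have hnB : ¬ (n ≤ (i : ℕ) ∧ n ≤ (j : ℕ)) := by
        rintro ⟨hi, hj⟩
        exact hns ⟨B, by rw [h1]; simp, (hmemB i).2 hi, (hmemB j).2 hj⟩
      have hDeq : D = α * (D / α) := by field_simp
      by_cases hi : (i : ℕ) < n
      · have hj : n ≤ (j : ℕ) := by omega
        calc d1 i j ≤ D := (hD i j).1
          _ = α * (D / α) := hDeq
          _ ≤ α * d' i j := by
              apply mul_le_mul_of_nonneg_left _ (le_of_lt hα)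
              calc D / α ≤ x j - x i := hgap2 i j hi hj
                _ ≤ |x i - x j| := by rw [abs_sub_comm]; exact le_abs_self _
      · have hi' : n ≤ (i : ℕ) := by omega
        have hj : (j : ℕ) < n := by omega
        calc d1 i j ≤ D := (hD i j).1
          _ = α * (D / α) := hDeq
          _ ≤ α * d' i j := by
              apply mul_le_mul_of_nonneg_left _ (le_of_lt hα)
              calc D / α ≤ x i - x j := hgap2 j i hj hi'
                _ ≤ |x i - x j| := le_abs_self _
  have e3 : f (fun i j => α * d' i j) = f d1 :=
    hcons d1 _ hr1 hrαd' htrans1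
  have hparts : ({A, B} : Finset (Finset (Fin (n + 2)))) = {A, {p}, {q}} := by
    rw [← h1, ← e3, e2, e1, h2]
  have hB : B ∈ ({A, {p}, {q}} : Finset (Finset (Fin (n + 2)))) := by
    rw [← hparts]; simp
  simp only [Finset.mem_insert, Finset.mem_singleton] at hB
  rcases hB with h | h | h
  · rw [h, hmemA] at hpB
    simp [hpdef] at hpB
  · rw [h, Finset.mem_singleton] at hqB
    exact hpq hqB.symm
  · rw [h, Finset.mem_singleton] at hpB
    exact hpq hpB
end

section
/- Let S be a finite set with |S| > 2, let d be a distance function on S, let Γ be any partition of S into nonempty clusters, and let m ≥ 1. Then there exists an injective map φ : S → ℝ^m such that the induced Euclidean distance d_E(i,j) = ‖φ(i) − φ(j)‖ is a Γ-transformation of d. Consequently, for every consistent clustering function f on S with f(d) = Γ, one has f(d_E) = Γ; i.e., every partition returned by a consistent clustering function is also returned on a distance function realizable in ℝ^m. -/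
open Finset

lemma nat_abs_cast_ge_one {x y : ℕ} (h : x ≠ y) : (1:ℝ) ≤ |(x:ℝ) - (y:ℝ)| := by
  have h1 : 1 ≤ |(x:ℤ) - (y:ℤ)| :=
    Int.one_le_abs (sub_ne_zero.mpr (by exact_mod_cast h))
  calc (1:ℝ) ≤ ((|(x:ℤ) - (y:ℤ)| : ℤ) : ℝ) := by exact_mod_cast h1
    _ = |(x:ℝ) - (y:ℝ)| := by rw [Int.cast_abs]; push_cast; ring_nf

/-- Every partition returned by a consistent clustering function is also returned
on a distance function realizable in `ℝ^m`: there is an injective embedding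
`φ : S → ℝ^m` whose induced Euclidean distance is a `Γ`-transformation of `d`. -/
theorem gamma_transform_realizable_in_euclidean (S : Type*) [Fintype S] [DecidableEq S]
    (hS : 2 < Fintype.card S) (d : S → S → ℝ) (hd : IsDistance d)
    (Γ : Finpartition (Finset.univ : Finset S)) (m : ℕ) (hm : 1 ≤ m) :
    ∃ φ : S → EuclideanSpace ℝ (Fin m), Function.Injective φ ∧
      IsGammaTransform Γ d (fun i j => dist (φ i) (φ j)) ∧
      ∀ f : (S → S → ℝ) → Finpartition (Finset.univ : Finset S),
        Consistent f → f d = Γ → f (fun i j => dist (φ i) (φ j)) = Γ := by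
  obtain ⟨hsymm, hzero, hpos⟩ := hd
  set n := Fintype.card S with hn
  have hn0 : 0 < n := by omega
  -- enumeration of S
  let e : S ≃ Fin n := Fintype.equivFin S
  -- cluster code
  let c : S → ℕ := fun i => (Fintype.equivFin (Finset S)) (Γ.part i)
  have hc : ∀ i j : S, SameCluster Γ i j ↔ c i = c j := by
    intro i j
    constructor
    · rintro ⟨C, hC, hi, hj⟩
      have h1 : Γ.part i = C := Γ.part_eq_of_mem hC hi
      have h2 : Γ.part j = C := Γ.part_eq_of_mem hC hj
      simp [c, h1, h2]
    · intro h
      have : Γ.part i = Γ.part j :=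
        (Fintype.equivFin (Finset S)).injective (Fin.val_injective h)
      exact ⟨Γ.part i, Γ.part_mem.mpr (mem_univ i), Γ.mem_part (mem_univ i),
        this ▸ Γ.mem_part (mem_univ j)⟩
  -- min and max distances
  obtain ⟨a, b, hab⟩ : ∃ a b : S, a ≠ b := by
    have : 1 < Fintype.card S := by omega
    exact Fintype.exists_pair_of_one_lt_card this
  have hne : (univ ×ˢ univ : Finset (S × S)).Nonempty := ⟨(a, b), by simp⟩
  set D : ℝ := (univ ×ˢ univ : Finset (S × S)).sup' hne (fun p => d p.1 p.2) with hD
  have hDle : ∀ i j : S, d i j ≤ D := fun i j =>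
    le_sup' (f := fun p : S × S => d p.1 p.2) (b := (i, j)) (by simp)
  have hne2 : ((univ ×ˢ univ : Finset (S × S)).filter (fun p => p.1 ≠ p.2)).Nonempty :=
    ⟨(a, b), by simp [hab]⟩
  set δ : ℝ := ((univ ×ˢ univ : Finset (S × S)).filter (fun p => p.1 ≠ p.2)).inf' hne2
      (fun p => d p.1 p.2) with hδ
  have hδle : ∀ i j : S, i ≠ j → δ ≤ d i j := fun i j hij =>
    inf'_le (f := fun p : S × S => d p.1 p.2) (b := (i, j)) (by simp [hij])
  have hδpos : 0 < δ := by
    rw [hδ, Finset.lt_inf'_iff]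
    rintro ⟨i, j⟩ hij
    simp only [mem_filter] at hij
    exact hpos i j hij.2
  set ε : ℝ := δ / (2 * n) with hε
  have hεpos : 0 < ε := by positivity
  set M : ℝ := D + δ with hM
  -- positions on the line
  set pos : S → ℝ := fun i => (c i : ℝ) * M + (e i : ℝ) * ε with hposdef
  -- key distance bounds
  have hsame : ∀ i j : S, c i = c j → |pos i - pos j| = |(e i : ℝ) - (e j : ℝ)| * ε := by
    intro i j h
    simp only [hposdef, h]
    rw [show (c j : ℝ) * M + (e i : ℝ) * ε - ((c j : ℝ) * M + (e j : ℝ) * ε)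
      = ((e i : ℝ) - (e j : ℝ)) * ε by ring, abs_mul, abs_of_pos hεpos]
  have heb : ∀ i j : S, |(e i : ℝ) - (e j : ℝ)| * ε ≤ δ := by
    intro i j
    have h1 : |(e i : ℝ) - (e j : ℝ)| ≤ 2 * n := by
      have hi : ((e i : ℕ) : ℝ) ≤ n := by exact_mod_cast le_of_lt (e i).isLt
      have hj : ((e j : ℕ) : ℝ) ≤ n := by exact_mod_cast le_of_lt (e j).isLt
      have hi0 : (0 : ℝ) ≤ (e i : ℕ) := Nat.cast_nonneg _
      have hj0 : (0 : ℝ) ≤ (e j : ℕ) := Nat.cast_nonneg _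
      rw [abs_sub_le_iff]; constructor <;> nlinarith
    calc |(e i : ℝ) - (e j : ℝ)| * ε ≤ (2 * n) * ε := by
          exact mul_le_mul_of_nonneg_right h1 hεpos.le
      _ = δ := by
        rw [hε]; have : (n:ℝ) ≠ 0 := Nat.cast_ne_zero.mpr hn0.ne'; field_simp
  have hdiff : ∀ i j : S, c i ≠ c j → D ≤ |pos i - pos j| := by
    intro i j h
    have h1 : (1 : ℝ) ≤ |(c i : ℝ) - (c j : ℝ)| := nat_abs_cast_ge_one h
    have hMpos : 0 < M := by
      have : δ ≤ D := le_trans (hδle a b hab) (hDle a b)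
      simp only [hM]; linarith
    have h2 : |pos i - pos j| ≥ |(c i : ℝ) - (c j : ℝ)| * M - |(e i : ℝ) - (e j : ℝ)| * ε := by
      have := abs_sub_abs_le_abs_sub (((c i : ℝ) - (c j : ℝ)) * M)
        (-(((e i : ℝ) - (e j : ℝ)) * ε))
      have heq : ((c i : ℝ) - (c j : ℝ)) * M - -(((e i : ℝ) - (e j : ℝ)) * ε) = pos i - pos j := by
        simp only [hposdef]; ring
      rw [heq, abs_neg, abs_mul, abs_mul, abs_of_pos hεpos, abs_of_pos hMpos] at this
      linarith
    have := heb i j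
    nlinarith
  -- injectivity of pos
  have hposinj : Function.Injective pos := by
    intro i j hij
    by_contra hne'
    by_cases hcc : c i = c j
    · have he : (e i : ℝ) ≠ (e j : ℝ) := by
        have : e i ≠ e j := fun h => hne' (e.injective h)
        exact_mod_cast fun h => this (Fin.ext (by exact_mod_cast h))
      have : |pos i - pos j| = |(e i : ℝ) - (e j : ℝ)| * ε := hsame i j hcc
      rw [hij, sub_self, abs_zero] at this
      have := mul_pos (abs_pos.mpr (sub_ne_zero.mpr he)) hεpos
      linarith
    · have h1 := hdiff i j hcc
      rw [hij, sub_self, abs_zero] at h1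
      have : δ ≤ D := le_trans (hδle a b hab) (hDle a b)
      linarith
  -- the embedding
  set i0 : Fin m := ⟨0, hm⟩ with hi0
  refine ⟨fun i => EuclideanSpace.single i0 (pos i), ?_, ?_, ?_⟩
  · intro i j h
    apply hposinj
    have := congrArg (fun v : EuclideanSpace ℝ (Fin m) => v i0) h
    simpa using this
  · constructor
    · intro i j hsc
      simp only [EuclideanSpace.dist_single_same, Real.dist_eq]
      rcases eq_or_ne i j with rfl | hij
      · simp [hzero]
      · rw [hsame i j ((hc i j).mp hsc)]
        exact le_trans (heb i j) (hδle i j hij)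
    · intro i j hsc
      simp only [EuclideanSpace.dist_single_same, Real.dist_eq]
      exact le_trans (hDle i j) (hdiff i j (fun h => hsc ((hc i j).mpr h)))
  · intro f hf hfd
    have hd' : IsDistance (fun i j => dist (EuclideanSpace.single i0 (pos i))
        (EuclideanSpace.single i0 (pos j))) := by
      refine ⟨fun i j => dist_comm _ _, fun i => dist_self _, fun i j hij => ?_⟩
      rw [dist_pos]
      intro h
      apply hij
      apply hposinj
      have := congrArg (fun v : EuclideanSpace ℝ (Fin m) => v i0) h
      simpa using this
    have hgt : IsGammaTransform (f d) d (fun i j => dist (EuclideanSpace.single i0 (pos i))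
        (EuclideanSpace.single i0 (pos j))) := by
      rw [hfd]
      constructor
      · intro i j hsc
        simp only [EuclideanSpace.dist_single_same, Real.dist_eq]
        rcases eq_or_ne i j with rfl | hij
        · simp [hzero]
        · rw [hsame i j ((hc i j).mp hsc)]
          exact le_trans (heb i j) (hδle i j hij)
      · intro i j hsc
        simp only [EuclideanSpace.dist_single_same, Real.dist_eq]
        exact le_trans (hDle i j) (hdiff i j (fun h => hsc ((hc i j).mpr h)))
    rw [hf d _ ⟨hsymm, hzero, hpos⟩ hd' hgt, hfd]
end

section
/- (k-richness of ideal k-means.) Let S be a finite set and let 1 ≤ k ≤ |S|. For every partition Γ of S into exactly k nonempty clusters, there exists an injective embedding x : S → ℝ such that Γ is a global minimizer of the k-means objective Q among all partitions of S into k nonempty clusters for the point family (x_s)_{s∈S}. -/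
open Finset

/-- Centroid of the points `x i`, `i ∈ C`, on the real line. -/
noncomputable def centroid1 {S : Type*} (x : S → ℝ) (C : Finset S) : ℝ :=
  (∑ i ∈ C, x i) / C.card

/-- The k-means objective of a partition `Γ` for the point family `x`:
the sum over clusters of the squared distances of the cluster's points to
the cluster centroid. -/
noncomputable def kmeansObjective {S : Type*} [Fintype S] [DecidableEq S]
    (x : S → ℝ) (Γ : Finpartition (Finset.univ : Finset S)) : ℝ :=
  ∑ C ∈ Γ.parts, ∑ i ∈ C, (x i - centroid1 x C) ^ 2

/-- The centroid minimizes the sum of squared deviations. -/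
lemma sum_sq_centroid_le {S : Type*} (x : S → ℝ) (C : Finset S) (a : ℝ) :
    ∑ i ∈ C, (x i - centroid1 x C) ^ 2 ≤ ∑ i ∈ C, (x i - a) ^ 2 := by
  rcases C.eq_empty_or_nonempty with rfl | hC
  · simp
  · set μ := centroid1 x C with hμ
    have hcard : (0 : ℝ) < C.card := by exact_mod_cast Finset.card_pos.mpr hC
    have h0 : ∑ i ∈ C, (x i - μ) = 0 := by
      rw [Finset.sum_sub_distrib, Finset.sum_const, nsmul_eq_mul, hμ, centroid1]
      field_simp
      ring
    have key : ∑ i ∈ C, (x i - a) ^ 2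
        = ∑ i ∈ C, (x i - μ) ^ 2 + 2 * (μ - a) * (∑ i ∈ C, (x i - μ))
          + C.card * (μ - a) ^ 2 := by
      rw [Finset.mul_sum]
      rw [show ((C.card : ℝ) * (μ - a) ^ 2) = ∑ _i ∈ C, (μ - a) ^ 2 by
        rw [Finset.sum_const, nsmul_eq_mul]]
      rw [← Finset.sum_add_distrib, ← Finset.sum_add_distrib]
      exact Finset.sum_congr rfl fun i _ => by ring
    rw [key, h0]
    nlinarith [sq_nonneg (μ - a), hcard.le, mul_nonneg hcard.le (sq_nonneg (μ - a))]

/-- If two partitions into the same number of parts are distinct, some part of the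
second one contains two points lying in different parts of the first one. -/
lemma exists_split {S : Type*} [Fintype S] [DecidableEq S]
    (Γ Γ' : Finpartition (Finset.univ : Finset S))
    (hcard : Γ'.parts.card = Γ.parts.card) (hne : Γ' ≠ Γ) :
    ∃ C ∈ Γ'.parts, ∃ i ∈ C, ∃ j ∈ C, Γ.part i ≠ Γ.part j := by
  by_contra hcon
  push_neg at hcon
  apply hne
  -- hcon : ∀ C ∈ Γ'.parts, ∀ i ∈ C, ∀ j ∈ C, Γ.part i = Γ.part j
  -- Define the map sending each part of Γ' to the part of Γ containing it.
  have hchoose : ∀ C : {C // C ∈ Γ'.parts}, (Γ'.nonempty_of_mem_parts C.2).choose ∈ C.1 :=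
    fun C => (Γ'.nonempty_of_mem_parts C.2).choose_spec
  let φ : {C // C ∈ Γ'.parts} → {D // D ∈ Γ.parts} := fun C =>
    ⟨Γ.part (Γ'.nonempty_of_mem_parts C.2).choose, Γ.part_mem.2 (mem_univ _)⟩
  have keyφ : ∀ (C : {C // C ∈ Γ'.parts}) (j : S), j ∈ C.1 → (φ C).1 = Γ.part j :=
    fun C j hj => hcon C.1 C.2 _ (hchoose C) j hj
  have hsurj : Function.Surjective φ := by
    rintro ⟨D, hD⟩
    obtain ⟨i, hi⟩ := Γ.nonempty_of_mem_parts hD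
    refine ⟨⟨Γ'.part i, Γ'.part_mem.2 (mem_univ _)⟩, ?_⟩
    apply Subtype.ext
    rw [keyφ ⟨Γ'.part i, Γ'.part_mem.2 (mem_univ _)⟩ i (Γ'.mem_part (mem_univ _))]
    exact Γ.part_eq_of_mem hD hi
  have hbij : Function.Bijective φ := by
    rw [Fintype.bijective_iff_surjective_and_card]
    refine ⟨hsurj, ?_⟩
    simp [Fintype.card_coe, hcard]
  -- Every part of Γ' is a part of Γ.
  have hsub : Γ'.parts ⊆ Γ.parts := by
    intro C hC
    have hCeq : C = (φ ⟨C, hC⟩).1 := by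
      apply Finset.Subset.antisymm
      · intro j hj
        rw [keyφ ⟨C, hC⟩ j hj]
        exact Γ.mem_part (mem_univ _)
      · intro j hj
        have hj' : j ∈ Γ'.part j := Γ'.mem_part (mem_univ _)
        have h1 : (φ ⟨Γ'.part j, Γ'.part_mem.2 (mem_univ _)⟩).1 = Γ.part j :=
          keyφ _ j hj'
        have h2 : Γ.part j = (φ ⟨C, hC⟩).1 := by
          have := Γ.part_eq_of_mem (Γ.part_mem.2 (mem_univ ((Γ'.nonempty_of_mem_parts
            (⟨C, hC⟩ : {C // C ∈ Γ'.parts}).2).choose))) hj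
          exact this.symm ▸ rfl
        have heq : φ ⟨Γ'.part j, Γ'.part_mem.2 (mem_univ _)⟩ = φ ⟨C, hC⟩ :=
          Subtype.ext (h1.trans h2)
        have := hbij.1 heq
        have hCC : Γ'.part j = C := congrArg Subtype.val this
        exact hCC ▸ hj'
    rw [hCeq]
    exact (φ ⟨C, hC⟩).2
  ext C
  constructor
  · exact fun h => hsub h
  · intro h
    have : Γ'.parts = Γ.parts :=
      Finset.eq_of_subset_of_card_le hsub (le_of_eq hcard.symm)
    rw [this]; exact h

/-- k-richness of ideal k-means: for every partition of a finite set `S` into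
exactly `k` nonempty clusters there is an injective embedding of `S` into `ℝ`
for which this partition is a global minimizer of the k-means objective among all
partitions into `k` nonempty clusters. -/
theorem kmeans_k_rich (S : Type*) [Fintype S] [DecidableEq S] (k : ℕ)
    (hk1 : 1 ≤ k) (hk2 : k ≤ Fintype.card S)
    (Γ : Finpartition (Finset.univ : Finset S)) (hΓ : Γ.parts.card = k) :
    ∃ x : S → ℝ, Function.Injective x ∧
      ∀ Γ' : Finpartition (Finset.univ : Finset S), Γ'.parts.card = k →
        kmeansObjective x Γ ≤ kmeansObjective x Γ' := by
  classical
  set n := Fintype.card S with hn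
  have hn1 : 1 ≤ n := le_trans hk1 hk2
  have hnR : (1 : ℝ) ≤ (n : ℝ) := by exact_mod_cast hn1
  have hnpos : (0 : ℝ) < (n : ℝ) := lt_of_lt_of_le one_pos hnR
  let e : S ≃ Fin n := Fintype.equivFin S
  let E : Finset S ≃ Fin (Fintype.card (Finset S)) := Fintype.equivFin (Finset S)
  set ε : ℝ := 1 / (4 * (n : ℝ) ^ 2) with hε
  have hεpos : 0 < ε := by positivity
  let x : S → ℝ := fun i => ((E (Γ.part i) : ℕ) : ℝ) + ε * ((e i : ℕ) : ℝ)
  -- bound on the offset term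
  have hoff : ∀ i : S, 0 ≤ ε * ((e i : ℕ) : ℝ) ∧ ε * ((e i : ℕ) : ℝ) ≤ 1 / (4 * (n : ℝ)) := by
    intro i
    have h1 : ((e i : ℕ) : ℝ) ≤ (n : ℝ) := by
      exact_mod_cast (e i).2.le
    constructor
    · positivity
    · calc ε * ((e i : ℕ) : ℝ) ≤ ε * (n : ℝ) := by
            apply mul_le_mul_of_nonneg_left h1 hεpos.le
        _ = 1 / (4 * (n : ℝ)) := by
            rw [hε]; field_simp
  have hoff4 : ∀ i : S, ε * ((e i : ℕ) : ℝ) ≤ 1 / 4 := by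
    intro i
    refine le_trans (hoff i).2 ?_
    rw [div_le_div_iff₀ (by positivity) (by norm_num)]
    nlinarith
  -- separation of points in different parts
  have hsep : ∀ i j : S, Γ.part i ≠ Γ.part j → (3 / 4 : ℝ) ^ 2 ≤ (x i - x j) ^ 2 := by
    intro i j hij
    have hEne : (E (Γ.part i) : ℕ) ≠ (E (Γ.part j) : ℕ) := by
      intro h
      exact hij (E.injective (Fin.ext h))
    have h1 : (1 : ℝ) ≤ |((E (Γ.part i) : ℕ) : ℝ) - ((E (Γ.part j) : ℕ) : ℝ)| := by
      rcases lt_or_gt_of_ne hEne with h | h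
      · have hc : ((E (Γ.part i) : ℕ) : ℝ) + 1 ≤ ((E (Γ.part j) : ℕ) : ℝ) := by
          exact_mod_cast Nat.succ_le_of_lt h
        rw [abs_sub_comm, abs_of_nonneg (by linarith)]; linarith
      · have hc : ((E (Γ.part j) : ℕ) : ℝ) + 1 ≤ ((E (Γ.part i) : ℕ) : ℝ) := by
          exact_mod_cast Nat.succ_le_of_lt h
        rw [abs_of_nonneg (by linarith)]; linarith
    obtain ⟨hi0, hi4⟩ := hoff i
    obtain ⟨hj0, hj4⟩ := hoff j
    have hi4' := hoff4 i
    have hj4' := hoff4 j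
    rcases abs_cases (((E (Γ.part i) : ℕ) : ℝ) - ((E (Γ.part j) : ℕ) : ℝ)) with ⟨hab, _⟩ | ⟨hab, _⟩ <;>
      · simp only [x]
        nlinarith
  -- injectivity
  have hinj : Function.Injective x := by
    intro i j hxij
    by_cases hp : Γ.part i = Γ.part j
    · have : ε * ((e i : ℕ) : ℝ) = ε * ((e j : ℕ) : ℝ) := by
        have : ((E (Γ.part i) : ℕ) : ℝ) = ((E (Γ.part j) : ℕ) : ℝ) := by rw [hp]
        simpa [x, this] using hxij
      have : ((e i : ℕ) : ℝ) = ((e j : ℕ) : ℝ) := mul_left_cancel₀ hεpos.ne' this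
      have : (e i : ℕ) = (e j : ℕ) := by exact_mod_cast this
      exact e.injective (Fin.ext this)
    · exfalso
      have := hsep i j hp
      rw [hxij] at this
      norm_num at this
  refine ⟨x, hinj, ?_⟩
  -- upper bound for Γ
  have hQΓ : kmeansObjective x Γ ≤ 1 / 16 := by
    have h1 : kmeansObjective x Γ ≤ ∑ C ∈ Γ.parts, ∑ i ∈ C, (x i - ((E C : ℕ) : ℝ)) ^ 2 :=
      Finset.sum_le_sum fun C _ => sum_sq_centroid_le x C _
    have h2 : ∀ C ∈ Γ.parts, ∑ i ∈ C, (x i - ((E C : ℕ) : ℝ)) ^ 2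
        ≤ (C.card : ℝ) * (1 / (16 * (n : ℝ) ^ 2)) := by
      intro C hC
      have hterm : ∀ i ∈ C, (x i - ((E C : ℕ) : ℝ)) ^ 2 ≤ 1 / (16 * (n : ℝ) ^ 2) := by
        intro i hi
        have hpart : Γ.part i = C := Γ.part_eq_of_mem hC hi
        have hxi : x i - ((E C : ℕ) : ℝ) = ε * ((e i : ℕ) : ℝ) := by
          simp [x, hpart]
        rw [hxi]
        obtain ⟨h0, h4⟩ := hoff i
        calc (ε * ((e i : ℕ) : ℝ)) ^ 2 ≤ (1 / (4 * (n : ℝ))) ^ 2 := by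
              apply sq_le_sq' (by linarith) h4
          _ = 1 / (16 * (n : ℝ) ^ 2) := by field_simp; ring
      calc ∑ i ∈ C, (x i - ((E C : ℕ) : ℝ)) ^ 2
          ≤ ∑ _i ∈ C, (1 / (16 * (n : ℝ) ^ 2)) := Finset.sum_le_sum hterm
        _ = (C.card : ℝ) * (1 / (16 * (n : ℝ) ^ 2)) := by
            rw [Finset.sum_const, nsmul_eq_mul]
    have h3 : ∑ C ∈ Γ.parts, ∑ i ∈ C, (x i - ((E C : ℕ) : ℝ)) ^ 2
        ≤ ∑ C ∈ Γ.parts, (C.card : ℝ) * (1 / (16 * (n : ℝ) ^ 2)) :=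
      Finset.sum_le_sum h2
    have hcards : ∑ C ∈ Γ.parts, (C.card : ℝ) = (n : ℝ) := by
      have := Γ.sum_card_parts
      rw [Finset.card_univ] at this
      exact_mod_cast this
    have h4 : ∑ C ∈ Γ.parts, (C.card : ℝ) * (1 / (16 * (n : ℝ) ^ 2))
        = (n : ℝ) * (1 / (16 * (n : ℝ) ^ 2)) := by
      rw [← Finset.sum_mul, hcards]
    have h5 : (n : ℝ) * (1 / (16 * (n : ℝ) ^ 2)) ≤ 1 / 16 := by
      rw [mul_one_div, div_le_div_iff₀ (by positivity) (by norm_num)]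
      nlinarith
    linarith
  clear_value x
  intro Γ' hΓ'
  by_cases hEq : Γ' = Γ
  · rw [hEq]
  · -- lower bound for Γ'
    obtain ⟨C, hC, i, hi, j, hj, hij⟩ := exists_split Γ Γ' (by rw [hΓ', hΓ]) hEq
    have hijne : i ≠ j := fun h => hij (h ▸ rfl)
    obtain ⟨μ, hμ⟩ : ∃ μ : ℝ, μ = centroid1 x C := ⟨_, rfl⟩
    have hpair : ({i, j} : Finset S) ⊆ C := by
      intro l hl
      rcases Finset.mem_insert.mp hl with rfl | hl
      · exact hi
      · rw [Finset.mem_singleton.mp hl]; exact hj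
    have h1 : (x i - μ) ^ 2 + (x j - μ) ^ 2 ≤ ∑ l ∈ C, (x l - μ) ^ 2 := by
      have h := Finset.sum_le_sum_of_subset_of_nonneg hpair
        (fun l _ _ => sq_nonneg (x l - μ))
      rwa [Finset.sum_pair hijne] at h
    have h2 : (x i - x j) ^ 2 / 2 ≤ (x i - μ) ^ 2 + (x j - μ) ^ 2 := by
      have hid : (x i - x j) ^ 2 / 2 + (x i + x j - 2 * μ) ^ 2 / 2
          = (x i - μ) ^ 2 + (x j - μ) ^ 2 := by ring
      linarith [sq_nonneg (x i + x j - 2 * μ)]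
    have h3 : (3 / 4 : ℝ) ^ 2 ≤ (x i - x j) ^ 2 := hsep i j hij
    have h4 : ∑ l ∈ C, (x l - μ) ^ 2 ≤ kmeansObjective x Γ' := by
      rw [hμ]
      apply Finset.single_le_sum (f := fun C => ∑ l ∈ C, (x l - centroid1 x C) ^ 2)
        (fun D _ => Finset.sum_nonneg fun l _ => sq_nonneg _) hC
    norm_num at h3
    linarith
end

section
/- Let x, y, d, λ, a, b be real numbers with x ≥ 0, d ≥ 0, b ≥ 0 and 0 ≤ λ ≤ 1. If a·(x² + y²) ≤ b·((d + x)² + y²), then a·((λx)² + (λy)²) ≤ b·((d + λx)² + (λy)²). -/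
/-- Key inequality for centric consistency of k-means (far-side case):
if it does not pay off to move a point to another cluster, it still does not pay
off after contracting the point towards its cluster center by a factor `λ`. -/
theorem contraction_inequality_far_side (x y d lam a b : ℝ)
    (hx : 0 ≤ x) (hd : 0 ≤ d) (hb : 0 ≤ b) (hlam0 : 0 ≤ lam) (hlam1 : lam ≤ 1)
    (h : a * (x ^ 2 + y ^ 2) ≤ b * ((d + x) ^ 2 + y ^ 2)) :
    a * ((lam * x) ^ 2 + (lam * y) ^ 2) ≤ b * ((d + lam * x) ^ 2 + (lam * y) ^ 2) := by
  have h1 : a * ((lam * x) ^ 2 + (lam * y) ^ 2) ≤ b * ((lam * d + lam * x) ^ 2 + (lam * y) ^ 2) := by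
    have := mul_le_mul_of_nonneg_left h (mul_nonneg hlam0 hlam0)
    nlinarith [this]
  have h2 : b * ((lam * d + lam * x) ^ 2 + (lam * y) ^ 2) ≤ b * ((d + lam * x) ^ 2 + (lam * y) ^ 2) := by
    have key : 0 ≤ b * (d * (1 - lam) * (d + lam * d + 2 * (lam * x))) :=
      mul_nonneg hb (mul_nonneg (mul_nonneg hd (by linarith))
        (by positivity))
    nlinarith [key]
  linarith
end

section
/- Let x, y, d, λ, a, b be real numbers with x ≥ 0, d ≥ 0, a ≥ b ≥ 0 and 0 ≤ λ ≤ 1. If a·(x² + y²) ≤ b·((d − x)² + y²), then a·((λx)² + (λy)²) ≤ b·((d − λx)² + (λy)²). -/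
/-- Key inequality for centric consistency of k-means (near-side case):
if it does not pay off to move a point to another cluster, it still does not pay
off after contracting the point towards its cluster center by a factor `λ`,
where the coefficients satisfy `a ≥ b ≥ 0`. -/
theorem contraction_inequality_near_side (x y d lam a b : ℝ)
    (hx : 0 ≤ x) (hd : 0 ≤ d) (hab : b ≤ a) (hb : 0 ≤ b)
    (hlam0 : 0 ≤ lam) (hlam1 : lam ≤ 1)
    (h : a * (x ^ 2 + y ^ 2) ≤ b * ((d - x) ^ 2 + y ^ 2)) :
    a * ((lam * x) ^ 2 + (lam * y) ^ 2) ≤ b * ((d - lam * x) ^ 2 + (lam * y) ^ 2) := by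
  have h2 := mul_le_mul_of_nonneg_left h (sq_nonneg lam)
  have hkey : b * (2 * d * x) ≤ b * d ^ 2 := by
    nlinarith [mul_nonneg (sub_nonneg.2 hab) (add_nonneg (sq_nonneg x) (sq_nonneg y))]
  nlinarith [h2, hkey, mul_nonneg hb hd,
    mul_nonneg (mul_nonneg hlam0 (sub_nonneg.2 hlam1)) (sub_nonneg.2 hkey),
    mul_nonneg (mul_nonneg hb hd) (sub_nonneg.2 hlam1)]
end

section
/- Let (x_i)_{i∈I} be a finite family of points in ℝ^m and Γ a partition of I into k nonempty clusters. Call Γ a local minimum of the k-means objective for (x_i) if for every index i ∈ I and every reassignment of the single point i from its cluster of Γ to another cluster of Γ (such that its original cluster remains nonempty), the k-means objective Q does not decrease. Suppose Γ is a local minimum for (x_i), and let (x'_i) be obtained from (x_i) by a Γ*-transform of one cluster C ∈ Γ with parameter λ ∈ (0,1]. Then Γ is also a local minimum of the k-means objective for (x'_i). -/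
open Finset

/-- Centroid of the points `x i`, `i ∈ A`, in `ℝ^m`. -/
noncomputable def centroid {ι : Type*} {m : ℕ} (x : ι → EuclideanSpace ℝ (Fin m))
    (A : Finset ι) : EuclideanSpace ℝ (Fin m) :=
  ((A.card : ℝ)⁻¹) • ∑ i ∈ A, x i

/-- Within-cluster sum of squared distances to the centroid. -/
noncomputable def within {ι : Type*} {m : ℕ} (x : ι → EuclideanSpace ℝ (Fin m))
    (A : Finset ι) : ℝ :=
  ∑ i ∈ A, ‖x i - centroid x A‖ ^ 2

/-- `Γ` is a local minimum of the k-means objective for the point family `x`: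
reassigning any single point `i` from its cluster `C1` (which stays nonempty) to
another cluster `C2` of `Γ` does not decrease the k-means objective.  Since only
the two clusters involved change, this is expressed via their within-sums. -/
def IsKMeansLocalMin {ι : Type*} [Fintype ι] [DecidableEq ι] {m : ℕ}
    (x : ι → EuclideanSpace ℝ (Fin m))
    (Γ : Finpartition (Finset.univ : Finset ι)) : Prop :=
  ∀ C1 ∈ Γ.parts, ∀ C2 ∈ Γ.parts, C1 ≠ C2 → ∀ i ∈ C1, 2 ≤ C1.card →
    within x C1 + within x C2 ≤ within x (C1.erase i) + within x (insert i C2)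

section Aux
variable {ι : Type*} [DecidableEq ι] {m : ℕ}

lemma centroid_congr (x y : ι → EuclideanSpace ℝ (Fin m)) (A : Finset ι)
    (h : ∀ i ∈ A, x i = y i) : centroid x A = centroid y A := by
  unfold _root_.centroid; rw [Finset.sum_congr rfl h]

lemma within_congr (x y : ι → EuclideanSpace ℝ (Fin m)) (A : Finset ι)
    (h : ∀ i ∈ A, x i = y i) : within x A = within y A := by
  unfold within
  rw [centroid_congr x y A h]
  exact Finset.sum_congr rfl fun i hi => by rw [h i hi]

lemma sum_eq_card_smul_centroid (x : ι → EuclideanSpace ℝ (Fin m)) (A : Finset ι)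
    (hA : A.Nonempty) : ∑ i ∈ A, x i = (A.card : ℝ) • centroid x A := by
  unfold _root_.centroid
  rw [smul_smul, mul_inv_cancel₀ (Nat.cast_pos.mpr hA.card_pos).ne', one_smul]

lemma sum_norm_sub_sq (x : ι → EuclideanSpace ℝ (Fin m)) (A : Finset ι)
    (hA : A.Nonempty) (p : EuclideanSpace ℝ (Fin m)) :
    ∑ i ∈ A, ‖x i - p‖ ^ 2 = within x A + (A.card : ℝ) * ‖centroid x A - p‖ ^ 2 := by
  set μ := centroid x A with hμ
  have key : ∀ i, ‖x i - p‖ ^ 2 =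
      ‖x i - μ‖ ^ 2 + 2 * (inner ℝ (x i - μ) (μ - p) : ℝ) + ‖μ - p‖ ^ 2 := by
    intro i
    have h : x i - p = (x i - μ) + (μ - p) := by abel
    rw [h, norm_add_sq_real]
  have hz : ∑ i ∈ A, (x i - μ) = 0 := by
    rw [Finset.sum_sub_distrib, sum_eq_card_smul_centroid x A hA, Finset.sum_const,
      ← Nat.cast_smul_eq_nsmul ℝ]
    simp [hμ]
  calc ∑ i ∈ A, ‖x i - p‖ ^ 2
      = ∑ i ∈ A, (‖x i - μ‖ ^ 2 + 2 * (inner ℝ (x i - μ) (μ - p) : ℝ) + ‖μ - p‖ ^ 2) := by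
        exact Finset.sum_congr rfl fun i _ => key i
    _ = within x A + 2 * (inner ℝ (∑ i ∈ A, (x i - μ)) (μ - p) : ℝ)
          + (A.card : ℝ) * ‖μ - p‖ ^ 2 := by
        rw [Finset.sum_add_distrib, Finset.sum_add_distrib, sum_inner, Finset.sum_const,
          ← Finset.mul_sum]
        simp [within, nsmul_eq_mul, hμ]
    _ = within x A + (A.card : ℝ) * ‖centroid x A - p‖ ^ 2 := by
        rw [hz]; simp [hμ]

lemma centroid_affine (x y : ι → EuclideanSpace ℝ (Fin m)) (A : Finset ι) (hA : A.Nonempty)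
    (p : EuclideanSpace ℝ (Fin m)) (lam : ℝ)
    (hy : ∀ i ∈ A, y i = p + lam • (x i - p)) :
    centroid y A = p + lam • (centroid x A - p) := by
  have hcard : ((A.card : ℝ)) ≠ 0 := (Nat.cast_pos.mpr hA.card_pos).ne'
  unfold _root_.centroid
  rw [Finset.sum_congr rfl hy, Finset.sum_add_distrib, Finset.sum_const,
    ← Finset.smul_sum, Finset.sum_sub_distrib, Finset.sum_const,
    ← Nat.cast_smul_eq_nsmul ℝ]
  match_scalars <;> field_simp <;> ring

lemma within_affine (x y : ι → EuclideanSpace ℝ (Fin m)) (A : Finset ι) (hA : A.Nonempty)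
    (p : EuclideanSpace ℝ (Fin m)) (lam : ℝ)
    (hy : ∀ i ∈ A, y i = p + lam • (x i - p)) :
    within y A = lam ^ 2 * within x A := by
  unfold within
  rw [centroid_affine x y A hA p lam hy, Finset.mul_sum]
  refine Finset.sum_congr rfl fun i hi => ?_
  rw [hy i hi]
  have h : p + lam • (x i - p) - (p + lam • (centroid x A - p))
      = lam • (x i - centroid x A) := by module
  rw [h, norm_smul, Real.norm_eq_abs, mul_pow, sq_abs]

lemma centroid_insert (x : ι → EuclideanSpace ℝ (Fin m)) (A : Finset ι) (hA : A.Nonempty)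
    {i : ι} (hi : i ∉ A) :
    centroid x (insert i A) = centroid x A + ((A.card : ℝ) + 1)⁻¹ • (x i - centroid x A) := by
  have hcard : ((A.card : ℝ)) ≠ 0 := (Nat.cast_pos.mpr hA.card_pos).ne'
  have hcard1 : ((A.card : ℝ)) + 1 ≠ 0 := by positivity
  unfold _root_.centroid
  rw [Finset.sum_insert hi, Finset.card_insert_of_notMem hi,
    sum_eq_card_smul_centroid x A hA]
  push_cast
  match_scalars <;> field_simp <;> ring

lemma sub_centroid_insert (x : ι → EuclideanSpace ℝ (Fin m)) (A : Finset ι) (hA : A.Nonempty)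
    {i : ι} (hi : i ∉ A) :
    x i - centroid x (insert i A)
      = ((A.card : ℝ) / ((A.card : ℝ) + 1)) • (x i - centroid x A) := by
  have hcard1 : ((A.card : ℝ)) + 1 ≠ 0 := by positivity
  rw [centroid_insert x A hA hi]
  match_scalars <;> field_simp <;> ring

lemma within_insert (x : ι → EuclideanSpace ℝ (Fin m)) (A : Finset ι) (hA : A.Nonempty)
    {i : ι} (hi : i ∉ A) :
    within x (insert i A) = within x A
      + ((A.card : ℝ) / ((A.card : ℝ) + 1)) * ‖x i - centroid x A‖ ^ 2 := by
  have hcard0 : (0:ℝ) < (A.card : ℝ) := Nat.cast_pos.mpr hA.card_pos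
  have hcard1 : ((A.card : ℝ)) + 1 ≠ 0 := by positivity
  have h1 : within x (insert i A)
      = ‖x i - centroid x (insert i A)‖ ^ 2 + ∑ j ∈ A, ‖x j - centroid x (insert i A)‖ ^ 2 := by
    unfold within
    rw [Finset.sum_insert hi]
  rw [h1, sum_norm_sub_sq x A hA, sub_centroid_insert x A hA hi]
  have h2 : centroid x A - centroid x (insert i A)
      = (-(((A.card : ℝ) + 1)⁻¹)) • (x i - centroid x A) := by
    rw [centroid_insert x A hA hi]; module
  rw [h2, norm_smul, norm_smul, Real.norm_eq_abs, Real.norm_eq_abs, mul_pow, mul_pow, sq_abs, sq_abs]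
  have hn : ‖x i - centroid x A‖ ^ 2 = ‖x i - centroid x A‖ ^ 2 := rfl
  field_simp
  ring

lemma key_ineq (a b : EuclideanSpace ℝ (Fin m)) (c lam : ℝ) (hc : 1 ≤ c)
    (h0 : 0 ≤ lam) (h1 : lam ≤ 1) (h : c * ‖b‖ ^ 2 ≤ ‖a + b‖ ^ 2) :
    c * lam ^ 2 * ‖b‖ ^ 2 ≤ ‖a + lam • b‖ ^ 2 := by
  have e1 : ‖a + b‖ ^ 2 = ‖a‖ ^ 2 + 2 * (inner ℝ a b : ℝ) + ‖b‖ ^ 2 := norm_add_sq_real a b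
  have e2 : ‖a + lam • b‖ ^ 2 = ‖a‖ ^ 2 + 2 * (lam * (inner ℝ a b : ℝ)) + lam ^ 2 * ‖b‖ ^ 2 := by
    rw [norm_add_sq_real, real_inner_smul_right, norm_smul, Real.norm_eq_abs, mul_pow, sq_abs]
  rw [e1] at h
  rw [e2]
  nlinarith [sq_nonneg ‖a‖, sq_nonneg ‖b‖, mul_nonneg (sub_nonneg.mpr h1) (sq_nonneg ‖a‖),
    mul_nonneg (mul_nonneg (sub_nonneg.mpr hc) (mul_nonneg h0 (sub_nonneg.mpr h1))) (sq_nonneg ‖b‖),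
    mul_le_mul_of_nonneg_left h h0]

lemma scalar_eq1 (n k t e2 : ℝ) (hn : 0 < n) (hk : 0 < k)
    (ht : t = (n / (n + 1)) ^ 2 * e2) :
    (k / (k + 1)) * ((((n + 1) / n) * ((k + 1) / k)) * t) = (n / (n + 1)) * e2 := by
  subst ht
  have h1 : n + 1 ≠ 0 := by positivity
  have h2 : k + 1 ≠ 0 := by positivity
  field_simp

lemma scalar_eq2 (n k t e2 lam : ℝ) (hn : 0 < n) (hk : 0 < k)
    (ht : t = (n / (n + 1)) ^ 2 * e2) :
    (n / (n + 1)) * (lam ^ 2 * e2)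
      = (k / (k + 1)) * ((((n + 1) / n) * ((k + 1) / k)) * lam ^ 2 * t) := by
  subst ht
  have h1 : n + 1 ≠ 0 := by positivity
  have h2 : k + 1 ≠ 0 := by positivity
  field_simp

lemma scalar_one_le (n k : ℝ) (hn : 1 ≤ n) (hk : 1 ≤ k) :
    1 ≤ ((n + 1) / n) * ((k + 1) / k) := by
  have hn0 : (0:ℝ) < n := by linarith
  have hk0 : (0:ℝ) < k := by linarith
  rw [div_mul_div_comm, le_div_iff₀ (by positivity)]
  nlinarith

end Aux

/-- Centric consistency (the `Γ*`-transform of one cluster) preserves local minima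
of the k-means objective. -/
theorem kmeans_localMin_preserved_by_centric_transform
    {ι : Type*} [Fintype ι] [DecidableEq ι] {m : ℕ}
    (x : ι → EuclideanSpace ℝ (Fin m))
    (Γ : Finpartition (Finset.univ : Finset ι))
    (hloc : IsKMeansLocalMin x Γ)
    (C : Finset ι) (hC : C ∈ Γ.parts)
    (lam : ℝ) (hlam0 : 0 < lam) (hlam1 : lam ≤ 1)
    (x' : ι → EuclideanSpace ℝ (Fin m))
    (hx' : ∀ i, x' i =
      if i ∈ C then centroid x C + lam • (x i - centroid x C) else x i) :
    IsKMeansLocalMin x' Γ := by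
  intro C1 h1 C2 h2 hne i hi hcard
  have hCne : C.Nonempty := Γ.nonempty_of_mem_parts hC
  set μ := centroid x C with hμdef
  have hxC : ∀ j ∈ C, x' j = μ + lam • (x j - μ) := fun j hj => by rw [hx' j, if_pos hj]
  have hxnC : ∀ j, j ∉ C → x' j = x j := fun j hj => by rw [hx' j, if_neg hj]
  by_cases hC1 : C1 = C
  · -- Case A: moving a point out of the transformed cluster C
    subst hC1
    have hdisj : Disjoint C1 C2 := Γ.disjoint h1 h2 hne
    have hiC2 : i ∉ C2 := fun h => Finset.disjoint_left.mp hdisj hi h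
    have hC2sub : ∀ j ∈ C2, j ∉ C1 := fun j hj => Finset.disjoint_right.mp hdisj hj
    have hC2ne : C2.Nonempty := Γ.nonempty_of_mem_parts h2
    set A := C1.erase i with hAdef
    have hiA : i ∉ A := Finset.notMem_erase i C1
    have hins : insert i A = C1 := Finset.insert_erase hi
    have hA1 : 1 ≤ A.card := by rw [hAdef, Finset.card_erase_of_mem hi]; omega
    have hAne : A.Nonempty := Finset.card_pos.mp hA1
    have hAsub : A ⊆ C1 := Finset.erase_subset i C1
    set n := (A.card : ℝ) with hndef
    set k := (C2.card : ℝ) with hkdef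
    have hn1 : (1:ℝ) ≤ n := by rw [hndef]; exact_mod_cast hA1
    have hk1 : (1:ℝ) ≤ k := by rw [hkdef]; exact_mod_cast hC2ne.card_pos
    have hn0 : (0:ℝ) < n := by linarith
    have hk0 : (0:ℝ) < k := by linarith
    set α := n / (n + 1) with hαdef
    set β := k / (k + 1) with hβdef
    have hβpos : 0 < β := by positivity
    -- x' agrees with x on C2
    have hx'C2 : ∀ j ∈ C2, x' j = x j := fun j hj => hxnC j (hC2sub j hj)
    have hwC2 : within x' C2 = within x C2 := (within_congr x' x C2 hx'C2).symm ▸ rfl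
    have hwC2' : within x' C2 = within x C2 := within_congr x' x C2 hx'C2
    have hcC2 : centroid x' C2 = centroid x C2 := centroid_congr x' x C2 hx'C2
    set μ2 := centroid x C2 with hμ2def
    set a := μ - μ2 with hadef
    set b := x i - μ with hbdef
    set cA := centroid x A with hcAdef
    set e2 := ‖x i - cA‖ ^ 2 with he2def
    -- relation between b and x i - cA
    have hb : b = α • (x i - cA) := by
      have := sub_centroid_insert x A hAne hiA
      rw [hins] at this
      exact this
    have ht : ‖b‖ ^ 2 = α ^ 2 * e2 := by
      rw [hb, norm_smul, Real.norm_eq_abs, mul_pow, sq_abs]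
    -- decomposition of within x C1 and within x (insert i C2)
    have hwxC1 : within x C1 = within x A + α * e2 := by
      rw [← hins]; exact within_insert x A hAne hiA
    have hv : x i - μ2 = a + b := by rw [hadef, hbdef]; abel
    have hwxins : within x (insert i C2) = within x C2 + β * ‖a + b‖ ^ 2 := by
      rw [within_insert x C2 hC2ne hiC2, ← hμ2def, hv]
    -- hypothesis from hloc
    have H : α * e2 ≤ β * ‖a + b‖ ^ 2 := by
      have := hloc C1 h1 C2 h2 hne i hi hcard
      rw [hwxC1, hwxins, ← hAdef] at this
      linarith only [this]
    -- x' sides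
    have hcA' : centroid x' A = μ + lam • (cA - μ) :=
      centroid_affine x x' A hAne μ lam (fun j hj => hxC j (hAsub hj))
    have hx'i : x' i = μ + lam • (x i - μ) := hxC i hi
    have hnorm1 : ‖x' i - centroid x' A‖ ^ 2 = lam ^ 2 * e2 := by
      have h : x' i - centroid x' A = lam • (x i - cA) := by
        rw [hx'i, hcA']; module
      rw [h, norm_smul, Real.norm_eq_abs, mul_pow, sq_abs]
    have hwx'C1 : within x' C1 = within x' A + α * (lam ^ 2 * e2) := by
      rw [← hins, within_insert x' A hAne hiA, hnorm1]
    have hnorm2 : x' i - centroid x' C2 = a + lam • b := by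
      rw [hcC2, hx'i, hadef, hbdef]; module
    have hwx'ins : within x' (insert i C2) = within x C2 + β * ‖a + lam • b‖ ^ 2 := by
      rw [within_insert x' C2 hC2ne hiC2, hnorm2, hwC2']
    -- the key numeric step
    have hc : 1 ≤ ((n + 1) / n) * ((k + 1) / k) := scalar_one_le n k hn1 hk1
    have heq1 : β * ((((n + 1) / n) * ((k + 1) / k)) * ‖b‖ ^ 2) = α * e2 :=
      scalar_eq1 n k (‖b‖ ^ 2) e2 hn0 hk0 ht
    have hkey_hyp : (((n + 1) / n) * ((k + 1) / k)) * ‖b‖ ^ 2 ≤ ‖a + b‖ ^ 2 := by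
      have h := H
      rw [← heq1] at h
      exact le_of_mul_le_mul_left h hβpos
    have hkey := key_ineq a b (((n + 1) / n) * ((k + 1) / k)) lam hc hlam0.le hlam1 hkey_hyp
    have heq2 : α * (lam ^ 2 * e2)
        = β * ((((n + 1) / n) * ((k + 1) / k)) * lam ^ 2 * ‖b‖ ^ 2) :=
      scalar_eq2 n k (‖b‖ ^ 2) e2 lam hn0 hk0 ht
    have hfinal : α * (lam ^ 2 * e2) ≤ β * ‖a + lam • b‖ ^ 2 := by
      rw [heq2]
      exact mul_le_mul_of_nonneg_left hkey hβpos.le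
    rw [hwx'C1, hwx'ins, hwC2']
    linarith only [hfinal]
  · by_cases hC2 : C2 = C
    · -- Case B: moving a point from C1 into the transformed cluster C
      subst hC2
      have hdisj : Disjoint C1 C2 := Γ.disjoint h1 h2 hne
      have hiC : i ∉ C2 := fun h => Finset.disjoint_left.mp hdisj hi h
      have hx'C1 : ∀ j ∈ C1, x' j = x j := fun j hj =>
        hxnC j (Finset.disjoint_left.mp hdisj hj)
      have hw1 : within x' C1 = within x C1 := within_congr x' x C1 hx'C1
      have hw2 : within x' (C1.erase i) = within x (C1.erase i) :=
        within_congr x' x _ (fun j hj => hx'C1 j (Finset.erase_subset i C1 hj))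
      have hcent : centroid x' C2 = μ := by
        have := centroid_affine x x' C2 hCne μ lam hxC
        rw [this]; simp [hμdef]
      have hx'i : x' i = x i := hxnC i hiC
      set γ := ((C2.card : ℝ)) / ((C2.card : ℝ) + 1) with hγdef
      have hq' : within x' (insert i C2) = within x' C2 + γ * ‖x i - μ‖ ^ 2 := by
        rw [within_insert x' C2 hCne hiC, hcent, hx'i]
      have hqx : within x (insert i C2) = within x C2 + γ * ‖x i - μ‖ ^ 2 := by
        rw [within_insert x C2 hCne hiC, ← hμdef]
      have H := hloc C1 h1 C2 h2 hne i hi hcard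
      rw [hqx] at H
      rw [hw1, hw2, hq']
      linarith only [H]
    · -- Case C: neither cluster is C
      have hd1 : Disjoint C1 C := Γ.disjoint h1 hC hC1
      have hd2 : Disjoint C2 C := Γ.disjoint h2 hC hC2
      have hx'C1 : ∀ j ∈ C1, x' j = x j := fun j hj =>
        hxnC j (Finset.disjoint_left.mp hd1 hj)
      have hx'C2 : ∀ j ∈ C2, x' j = x j := fun j hj =>
        hxnC j (Finset.disjoint_left.mp hd2 hj)
      have hw1 : within x' C1 = within x C1 := within_congr x' x C1 hx'C1
      have hw2 : within x' C2 = within x C2 := within_congr x' x C2 hx'C2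
      have hw3 : within x' (C1.erase i) = within x (C1.erase i) :=
        within_congr x' x _ (fun j hj => hx'C1 j (Finset.erase_subset i C1 hj))
      have hw4 : within x' (insert i C2) = within x (insert i C2) := by
        refine within_congr x' x _ (fun j hj => ?_)
        rcases Finset.mem_insert.mp hj with rfl | hj
        · exact hx'C1 j hi
        · exact hx'C2 j hj
      rw [hw1, hw2, hw3, hw4]
      exact hloc C1 h1 C2 h2 hne i hi hcard
end

section
/- (Uniqueness of perfect ball clustering.) Let X be a finite set of points in ℝ^m and k ≥ 1. If P1 is a perfect ball clustering of X into k clusters with some radius ρ1 > 0 and P2 is a perfect ball clustering of X into k clusters with some radius ρ2 > 0, then P1 = P2. -/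
open Finset Metric

/-- `P` is a perfect ball clustering of the finite point set `X ⊆ ℝ^m` into `k`
clusters with radius `ρ`: it has exactly `k` parts and there is an assignment of a
center to each part such that centers of distinct parts are at distance at least
`4ρ` and each part is contained in the open ball of radius `ρ` around its center. -/
def IsPerfectBallClustering {m : ℕ} [DecidableEq (EuclideanSpace ℝ (Fin m))]
    {X : Finset (EuclideanSpace ℝ (Fin m))} (P : Finpartition X) (k : ℕ) (ρ : ℝ) :
    Prop :=
  P.parts.card = k ∧
  ∃ c : Finset (EuclideanSpace ℝ (Fin m)) → EuclideanSpace ℝ (Fin m),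
    (∀ C1 ∈ P.parts, ∀ C2 ∈ P.parts, C1 ≠ C2 → 4 * ρ ≤ dist (c C1) (c C2)) ∧
    (∀ C ∈ P.parts, ∀ p ∈ C, dist p (c C) < ρ)

private lemma pbc_aux {m : ℕ} [DecidableEq (EuclideanSpace ℝ (Fin m))]
    (X : Finset (EuclideanSpace ℝ (Fin m))) (k : ℕ)
    (P1 P2 : Finpartition X) (ρ1 ρ2 : ℝ) (hρ1 : 0 < ρ1) (hρ2 : 0 < ρ2)
    (hle : ρ1 ≤ ρ2)
    (h1 : IsPerfectBallClustering P1 k ρ1) (h2 : IsPerfectBallClustering P2 k ρ2) :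
    P1 = P2 := by
  obtain ⟨hk1, c1, hsep1, hin1⟩ := h1
  obtain ⟨hk2, c2, hsep2, hin2⟩ := h2
  -- Key claim: if a part of P1 meets a part of P2, it is contained in it.
  have key : ∀ C1 ∈ P1.parts, ∀ C2 ∈ P2.parts, ∀ p ∈ C1, p ∈ C2 → C1 ⊆ C2 := by
    intro C1 hC1 C2 hC2 p hpC1 hpC2 q hqC1
    have hqX : q ∈ X := P1.le hC1 hqC1
    obtain ⟨C2', hC2', hqC2'⟩ := P2.exists_mem hqX
    by_cases h : C2' = C2
    · exact h ▸ hqC2'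
    · exfalso
      have hs := hsep2 C2 hC2 C2' hC2' (Ne.symm h)
      have hp2 := hin2 C2 hC2 p hpC2
      have hq2 := hin2 C2' hC2' q hqC2'
      have hp1 := hin1 C1 hC1 p hpC1
      have hq1 := hin1 C1 hC1 q hqC1
      have t1 : dist (c2 C2) (c2 C2') ≤ dist (c2 C2) p + dist p q + dist q (c2 C2') :=
        dist_triangle4 _ _ _ _
      have t2 : dist p q ≤ dist p (c1 C1) + dist (c1 C1) q := dist_triangle _ _ _
      rw [dist_comm] at hp2
      rw [dist_comm (c1 C1) q] at t2
      linarith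
  -- the map sending a part of P1 to the part of P2 containing it
  have hex : ∀ C1 ∈ P1.parts, ∃ C2 ∈ P2.parts, C1 ⊆ C2 := by
    intro C1 hC1
    obtain ⟨p, hp⟩ := P1.nonempty_of_mem_parts hC1
    obtain ⟨C2, hC2, hpC2⟩ := P2.exists_mem (P1.le hC1 hp)
    exact ⟨C2, hC2, key C1 hC1 C2 hC2 p hp hpC2⟩
  choose f hf hfsub using hex
  -- f is surjective onto P2.parts
  have hsurj : ∀ C2 ∈ P2.parts, ∃ C1, ∃ h : C1 ∈ P1.parts, f C1 h = C2 := by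
    intro C2 hC2
    obtain ⟨q, hq⟩ := P2.nonempty_of_mem_parts hC2
    obtain ⟨C1, hC1, hqC1⟩ := P1.exists_mem (P2.le hC2 hq)
    refine ⟨C1, hC1, ?_⟩
    exact P2.eq_of_mem_parts (hf C1 hC1) hC2 (hfsub C1 hC1 hqC1) hq
  have hcard : P1.parts.card ≤ P2.parts.card := by rw [hk1, hk2]
  have hinj := Finset.inj_on_of_surj_on_of_card_le f hf hsurj hcard
  -- each part of P1 equals its image part
  have heq : ∀ C1 (h : C1 ∈ P1.parts), C1 = f C1 h := by
    intro C1 hC1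
    refine Finset.Subset.antisymm (hfsub C1 hC1) ?_
    intro q hq
    obtain ⟨C1', hC1', hqC1'⟩ := P1.exists_mem (P2.le (hf C1 hC1) hq)
    have : f C1' hC1' = f C1 hC1 :=
      P2.eq_of_mem_parts (hf C1' hC1') (hf C1 hC1) (hfsub C1' hC1' hqC1') hq
    have := hinj hC1' hC1 this
    exact this ▸ hqC1'
  have hsub : P1.parts ⊆ P2.parts := by
    intro C1 hC1
    rw [heq C1 hC1]
    exact hf C1 hC1
  have : P1.parts = P2.parts :=
    Finset.eq_of_subset_of_card_le hsub (by rw [hk1, hk2])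
  exact Finpartition.ext this

/-- Uniqueness of perfect ball clustering: two perfect ball clusterings of the same
finite point set into the same number `k` of clusters (possibly with different radii)
coincide. -/
theorem perfect_ball_clustering_unique {m : ℕ}
    [DecidableEq (EuclideanSpace ℝ (Fin m))]
    (X : Finset (EuclideanSpace ℝ (Fin m))) (k : ℕ) (hk : 1 ≤ k)
    (P1 P2 : Finpartition X) (ρ1 ρ2 : ℝ) (hρ1 : 0 < ρ1) (hρ2 : 0 < ρ2)
    (h1 : IsPerfectBallClustering P1 k ρ1) (h2 : IsPerfectBallClustering P2 k ρ2) :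
    P1 = P2 := by
  rcases le_total ρ1 ρ2 with h | h
  · exact pbc_aux X k P1 P2 ρ1 ρ2 hρ1 hρ2 h h1 h2
  · exact (pbc_aux X k P2 P1 ρ2 ρ1 hρ2 hρ1 h h2 h1).symm
end

section
/- Let n1, n2, n21 be positive real numbers with n21 ≤ n2/2 and set n22 = n2 − n21. Let r1, r2, r21, r22, g be nonnegative reals with r21 ≤ r2, r22 ≤ r2, n21·r21 = n22·r22, and g ≥ r2·√(2·(1 + n2/(2·n1))) − r1. Then n21·r21² + n22·r22² ≤ (n1·n21/(n1 + n21))·(r1 + r2 + g − r21)². (This is the gap condition ensuring that a cluster of n1 elements enclosed in a ball of radius r1 does not profitably take over n21 elements of a neighboring cluster of n2 elements enclosed in a ball of radius r2, when the gap between the enclosing balls is g.) -/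
/-- Gap condition ensuring that a cluster of `n1` elements enclosed in a ball of
radius `r1` does not profitably take over `n21` elements of a neighboring cluster of
`n2` elements enclosed in a ball of radius `r2`, when the gap between the enclosing
balls is `g`. -/
theorem takeover_gap_inequality
    (n1 n2 n21 n22 r1 r2 r21 r22 g : ℝ)
    (hn1 : 0 < n1) (hn2 : 0 < n2) (hn21 : 0 < n21)
    (hn21le : n21 ≤ n2 / 2) (hn22 : n22 = n2 - n21)
    (hr1 : 0 ≤ r1) (hr2 : 0 ≤ r2) (hr21 : 0 ≤ r21) (hr22 : 0 ≤ r22) (hg : 0 ≤ g)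
    (hr21le : r21 ≤ r2) (hr22le : r22 ≤ r2)
    (hbal : n21 * r21 = n22 * r22)
    (hgap : r2 * Real.sqrt (2 * (1 + n2 / (2 * n1))) - r1 ≤ g) :
    n21 * r21 ^ 2 + n22 * r22 ^ 2 ≤
      (n1 * n21 / (n1 + n21)) * (r1 + r2 + g - r21) ^ 2 := by
  set s := Real.sqrt (2 * (1 + n2 / (2 * n1))) with hs_def
  have harg : (0:ℝ) ≤ 2 * (1 + n2 / (2 * n1)) := by positivity
  have hs : s ^ 2 = 2 * (1 + n2 / (2 * n1)) := Real.sq_sqrt harg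
  have hs0 : 0 ≤ s := Real.sqrt_nonneg _
  have hA : r2 * s ≤ r1 + r2 + g - r21 := by linarith
  have hA2 : (r2 * s) ^ 2 ≤ (r1 + r2 + g - r21) ^ 2 :=
    pow_le_pow_left₀ (by positivity) hA 2
  set c := n1 * n21 / (n1 + n21) with hc_def
  have hc0 : 0 ≤ c := by positivity
  have hden : (0:ℝ) < n1 + n21 := by linarith
  have key : c * (r2 * s) ^ 2 = n21 * r2 ^ 2 * (2 * n1 + n2) / (n1 + n21) := by
    rw [mul_pow, hs, hc_def]
    field_simp
  have hmid : 2 * n21 * r2 ^ 2 ≤ c * (r2 * s) ^ 2 := by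
    rw [key, le_div_iff₀ hden]
    nlinarith [mul_nonneg (mul_nonneg hn21.le (sq_nonneg r2)) (by linarith : (0:ℝ) ≤ n2 - 2*n21)]
  have hlhs : n21 * r21 ^ 2 + n22 * r22 ^ 2 ≤ 2 * n21 * r2 ^ 2 := by
    have h1 : n22 * r22 ^ 2 = n21 * r21 * r22 := by
      have : n22 * r22 ^ 2 = (n22 * r22) * r22 := by ring
      rw [this, ← hbal]
    nlinarith [mul_nonneg hn21.le hr21, mul_nonneg hn21.le hr2,
      mul_le_mul hr21le hr22le hr22 hr2, mul_le_mul hr21le hr21le hr21 hr2]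
  calc n21 * r21 ^ 2 + n22 * r22 ^ 2 ≤ 2 * n21 * r2 ^ 2 := hlhs
    _ ≤ c * (r2 * s) ^ 2 := hmid
    _ ≤ c * (r1 + r2 + g - r21) ^ 2 := by
        exact mul_le_mul_of_nonneg_left hA2 hc0
end

section
/- Let I be a nonempty finite index set and let (y_i)_{i∈I} and (y'_i)_{i∈I} be families of points in ℝ^m such that ‖y'_i − y'_j‖ ≤ ‖y_i − y_j‖ for all i, j ∈ I. Let x, x' ∈ ℝ^m satisfy ‖x' − y'_i‖ ≥ ‖x − y_i‖ for all i ∈ I. Then ‖x' − μ'‖ ≥ ‖x − μ‖, where μ and μ' are the centroids of (y_i)_{i∈I} and (y'_i)_{i∈I} respectively. (Hence a Kleinberg consistency transformation, which shrinks within-cluster distances and enlarges distances from outside points to cluster elements, never decreases the distance from an outside point to the cluster's centroid.) -/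
open Finset

lemma key_identity {E : Type*} [NormedAddCommGroup E] [InnerProductSpace ℝ E]
    {ι : Type*} [Fintype ι] (x : E) (y : ι → E) :
    ‖(Fintype.card ι : ℝ) • x - ∑ i, y i‖ ^ 2 =
      (Fintype.card ι : ℝ) * ∑ i, ‖x - y i‖ ^ 2
        - (1 / 2) * ∑ i, ∑ j, ‖y i - y j‖ ^ 2 := by
  simp only [@norm_sub_sq_real, inner_sum, sum_inner, real_inner_smul_left,
    real_inner_smul_right, norm_smul, Finset.mul_sum, Finset.sum_sub_distrib,
    Finset.sum_add_distrib, real_inner_self_eq_norm_sq, Finset.sum_const,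
    Finset.card_univ, nsmul_eq_mul, Real.norm_eq_abs, mul_pow, sq_abs]
  have h1 : ‖∑ i : ι, y i‖ ^ 2 = ∑ i, ∑ j, (inner ℝ (y i) (y j) : ℝ) := by
    rw [← real_inner_self_eq_norm_sq, sum_inner]
    exact Finset.sum_congr rfl fun i _ => inner_sum _ _ _
  have h2 : ∑ i : ι, 2 * ((Fintype.card ι : ℝ) * inner ℝ x (y i)) =
      (Fintype.card ι : ℝ) * ∑ i : ι, 2 * (inner ℝ x (y i) : ℝ) := by
    rw [Finset.mul_sum]; exact Finset.sum_congr rfl fun i _ => by ring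
  have h3 : ∑ i : ι, ∑ j : ι, 2 * (inner ℝ (y i) (y j) : ℝ) =
      2 * ∑ i : ι, ∑ j : ι, (inner ℝ (y i) (y j) : ℝ) := by
    rw [Finset.mul_sum]
    exact Finset.sum_congr rfl fun i _ => (Finset.mul_sum _ _ _).symm
  have h4 : ∑ i : ι, (Fintype.card ι : ℝ) * ‖y i‖ ^ 2 = (Fintype.card ι : ℝ) * ∑ i : ι, ‖y i‖ ^ 2 :=
    (Finset.mul_sum _ _ _).symm
  rw [h1, h2, h3, h4]
  ring

/-- A Kleinberg consistency transformation never decreases the distance from an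
outside point to a cluster's centroid: if all pairwise distances within the family
`y` do not increase (yielding `y'`) while all distances from `x` to the members of
the family do not decrease (with `x` becoming `x'`), then the distance from the
outside point to the centroid of the family does not decrease. -/
theorem dist_to_centroid_nondecreasing {ι : Type*} [Fintype ι] [Nonempty ι] {m : ℕ}
    (y y' : ι → EuclideanSpace ℝ (Fin m))
    (hwithin : ∀ i j, ‖y' i - y' j‖ ≤ ‖y i - y j‖)
    (x x' : EuclideanSpace ℝ (Fin m))
    (houter : ∀ i, ‖x - y i‖ ≤ ‖x' - y' i‖) :
    ‖x - ((Fintype.card ι : ℝ)⁻¹) • ∑ i, y i‖ ≤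
      ‖x' - ((Fintype.card ι : ℝ)⁻¹) • ∑ i, y' i‖ := by
  set n : ℝ := (Fintype.card ι : ℝ) with hn
  have hnpos : (0 : ℝ) < n := by
    rw [hn]; exact_mod_cast Fintype.card_pos
  have hrw : ∀ z : EuclideanSpace ℝ (Fin m), ∀ w : ι → EuclideanSpace ℝ (Fin m),
      z - n⁻¹ • ∑ i, w i = n⁻¹ • (n • z - ∑ i, w i) := by
    intro z w
    rw [smul_sub, smul_smul, inv_mul_cancel₀ hnpos.ne', one_smul]
  rw [hrw x y, hrw x' y', norm_smul, norm_smul]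
  apply mul_le_mul_of_nonneg_left _ (norm_nonneg _)
  have hsq : ‖n • x - ∑ i, y i‖ ^ 2 ≤ ‖n • x' - ∑ i, y' i‖ ^ 2 := by
    rw [key_identity, key_identity]
    apply sub_le_sub
    · apply mul_le_mul_of_nonneg_left _ hnpos.le
      exact Finset.sum_le_sum fun i _ =>
        pow_le_pow_left₀ (norm_nonneg _) (houter i) 2
    · apply mul_le_mul_of_nonneg_left _ (by norm_num)
      exact Finset.sum_le_sum fun i _ => Finset.sum_le_sum fun j _ =>
        pow_le_pow_left₀ (norm_nonneg _) (hwithin i j) 2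
  exact (pow_le_pow_iff_left₀ (norm_nonneg _) (norm_nonneg _) two_ne_zero).mp hsq
end
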